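/- In a nonlinear model (p_k ≠ k/m for some 0 ≤ k ≤ m) with X_0 > 0 and Y_0 > 0, if p_0 > 0 and p_m < 1, then P(0) = p_0/2 > 0 and P(1) = (p_m − 1)/2 < 0, so every point of Z_P lies in the open interval (0,1); consequently a_n converges almost surely to a limit lying in (0,1), i.e., the two types coexist in the limit. -/

import Mathlib

open MeasureTheory ProbabilityTheory Filter Set

noncomputable section

/-- The polynomial `P(z) = (1/2) ∑_{k=0}^m C(m,k) z^k (1-z)^{m-k} (p_k - k/m)`. -/
def polyP (m : ℕ) (p : ℕ → ℝ) (z : ℝ) : ℝ :=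
  (1 / 2) * ∑ k ∈ Finset.range (m + 1),
    (m.choose k : ℝ) * z ^ k * (1 - z) ^ (m - k) * (p k - (k : ℝ) / m)

/-- The zero set `Z_P = {z ∈ [0,1] : P(z) = 0}`. -/
def zeroSetP (m : ℕ) (p : ℕ → ℝ) : Set ℝ :=
  {z ∈ Set.Icc (0 : ℝ) 1 | polyP m p z = 0}

/-- The two-type preferential attachment process with `m` edges per new node and type
adoption parameters `p 0, …, p m`, defined on a probability space `(Ω, μ)` with filtration
`F`.  `A n` is the number of red nodes and `X n` the sum of the degrees of red nodes at time
`n`; the transition probabilities given `F n` are those of the model: a number `k` of red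
neighbours is drawn from the `Binomial(m, x_n)` distribution, and then the new node is red
with probability `p k` (adding `1` to the red nodes and `k + m` to the red degrees) and blue
with probability `1 - p k` (adding `k` to the red degrees). -/
structure PAProcess (Ω : Type) [MeasurableSpace Ω] where
  μ : Measure Ω
  isProb : IsProbabilityMeasure μ
  m : ℕ
  hm : 1 ≤ m
  p : ℕ → ℝ
  hp : ∀ k ≤ m, p k ∈ Set.Icc (0 : ℝ) 1
  A : ℕ → Ω → ℕ
  X : ℕ → Ω → ℕ
  F : Filtration ℕ ‹MeasurableSpace Ω›
  A0 : ℕ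
  B0 : ℕ
  X0 : ℕ
  Y0 : ℕ
  hA0 : ∀ ω, A 0 ω = A0
  hX0 : ∀ ω, X 0 ω = X0
  adaptedA : ∀ n, Measurable[F n] (A n)
  adaptedX : ∀ n, Measurable[F n] (X n)
  hXle : ∀ n ω, X n ω ≤ X0 + Y0 + 2 * m * n
  step_red : ∀ n, ∀ k ≤ m,
    μ[Set.indicator {ω | A (n + 1) ω = A n ω + 1 ∧ X (n + 1) ω = X n ω + k + m}
        (fun _ => (1 : ℝ)) | F n]
      =ᵐ[μ] fun ω => (m.choose k : ℝ) *
        ((X n ω : ℝ) / ((X0 : ℝ) + Y0 + 2 * m * n)) ^ k *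
        (1 - (X n ω : ℝ) / ((X0 : ℝ) + Y0 + 2 * m * n)) ^ (m - k) * p k
  step_blue : ∀ n, ∀ k ≤ m,
    μ[Set.indicator {ω | A (n + 1) ω = A n ω ∧ X (n + 1) ω = X n ω + k}
        (fun _ => (1 : ℝ)) | F n]
      =ᵐ[μ] fun ω => (m.choose k : ℝ) *
        ((X n ω : ℝ) / ((X0 : ℝ) + Y0 + 2 * m * n)) ^ k *
        (1 - (X n ω : ℝ) / ((X0 : ℝ) + Y0 + 2 * m * n)) ^ (m - k) * (1 - p k)

namespace PAProcess

variable {Ω : Type} [MeasurableSpace Ω] (P : PAProcess Ω)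

/-- Total degree `S_n = S_0 + 2mn`. -/
def S (n : ℕ) : ℕ := P.X0 + P.Y0 + 2 * P.m * n

/-- Normalized red degree `x_n = X_n / S_n`. -/
def x (n : ℕ) (ω : Ω) : ℝ := (P.X n ω : ℝ) / (P.S n : ℝ)

/-- Normalized red node count `a_n = A_n / (A_0 + B_0 + n)`. -/
def a (n : ℕ) (ω : Ω) : ℝ := (P.A n ω : ℝ) / ((P.A0 : ℝ) + P.B0 + n)

/-- The polynomial `P` of the process. -/
def poly : ℝ → ℝ := polyP P.m P.p

/-- The zero set `Z_P` of the process. -/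
def Zp : Set ℝ := zeroSetP P.m P.p

end PAProcess


section AuxiliaryLemmas

open Topology

def polyQ (m : ℕ) (p : ℕ → ℝ) (z : ℝ) : ℝ :=
  ∑ k ∈ Finset.range (m + 1),
    (m.choose k : ℝ) * z ^ k * (1 - z) ^ (m - k) * p k

lemma bernstein_sum_one (m : ℕ) (z : ℝ) :
    ∑ k ∈ Finset.range (m + 1), (m.choose k : ℝ) * z ^ k * (1 - z) ^ (m - k) = 1 := by
  have h := add_pow z (1 - z) m
  simp only [add_sub_cancel, one_pow] at h
  conv_rhs => rw [h]
  apply Finset.sum_congr rfl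
  intro k _
  ring

lemma bernstein_sum_k (m : ℕ) (z : ℝ) :
    ∑ k ∈ Finset.range (m + 1), (k : ℝ) * ((m.choose k : ℝ) * z ^ k * (1 - z) ^ (m - k))
      = m * z := by
  cases m with
  | zero => simp
  | succ n =>
    rw [Finset.sum_range_succ']
    simp only [Nat.cast_zero, zero_mul, add_zero]
    have key : ∀ k ∈ Finset.range (n + 1),
        ((k + 1 : ℕ) : ℝ) * (((n+1).choose (k+1) : ℝ) * z ^ (k+1) * (1 - z) ^ (n + 1 - (k+1)))
        = ((n+1) : ℝ) * z * ((n.choose k : ℝ) * z ^ k * (1 - z) ^ (n - k)) := by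
      intro k _
      have h1 : (k + 1) * (n+1).choose (k+1) = (n+1) * n.choose k := by
        rw [mul_comm]
        exact (Nat.add_one_mul_choose_eq n k).symm
      have h2 : ((k + 1 : ℕ) : ℝ) * ((n+1).choose (k+1) : ℝ) = ((n+1 : ℕ) : ℝ) * (n.choose k : ℝ) := by
        rw [← Nat.cast_mul, ← Nat.cast_mul, h1]
      have h3 : n + 1 - (k + 1) = n - k := by omega
      rw [h3]
      push_cast at h2 ⊢
      linear_combination (z ^ (k+1) * (1 - z) ^ (n - k)) * h2
    calc ∑ k ∈ Finset.range (n + 1),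
          ((k + 1 : ℕ) : ℝ) * (((n+1).choose (k+1) : ℝ) * z ^ (k+1) * (1 - z) ^ (n + 1 - (k+1)))
        = ∑ k ∈ Finset.range (n + 1),
          ((n+1) : ℝ) * z * ((n.choose k : ℝ) * z ^ k * (1 - z) ^ (n - k)) :=
          Finset.sum_congr rfl key
      _ = ((n+1) : ℝ) * z := by
          rw [← Finset.mul_sum, bernstein_sum_one n z, mul_one]
      _ = ((n+1 : ℕ) : ℝ) * z := by push_cast; ring

lemma polyP_eq_polyQ (m : ℕ) (hm : 1 ≤ m) (p : ℕ → ℝ) (z : ℝ) :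
    2 * polyP m p z = polyQ m p z - z := by
  have hm' : (m : ℝ) ≠ 0 := by positivity
  rw [polyP, polyQ]
  rw [← mul_assoc]
  norm_num
  have expand : ∀ k ∈ Finset.range (m + 1),
      (m.choose k : ℝ) * z ^ k * (1 - z) ^ (m - k) * (p k - (k : ℝ) / m)
      = (m.choose k : ℝ) * z ^ k * (1 - z) ^ (m - k) * p k
        - (1 / m) * ((k:ℝ) * ((m.choose k : ℝ) * z ^ k * (1 - z) ^ (m - k))) := by
    intro k _
    field_simp
  rw [Finset.sum_congr rfl expand, Finset.sum_sub_distrib, ← Finset.mul_sum, bernstein_sum_k]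
  field_simp

lemma polyP_zero (m : ℕ) (hm : 1 ≤ m) (p : ℕ → ℝ) : polyP m p 0 = p 0 / 2 := by
  rw [polyP]
  rw [Finset.sum_eq_single 0]
  · simp; ring
  · intro k _ hk
    have : (0:ℝ) ^ k = 0 := zero_pow hk
    rw [this]; ring
  · intro h; simp at h

lemma polyP_one (m : ℕ) (hm : 1 ≤ m) (p : ℕ → ℝ) : polyP m p 1 = (p m - 1) / 2 := by
  have hm' : (m : ℝ) ≠ 0 := by positivity
  rw [polyP]
  rw [Finset.sum_eq_single m]
  · simp [div_self hm']
    ring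
  · intro k hk hkm
    have hk' : k < m + 1 := Finset.mem_range.mp hk
    have : (1:ℝ) - 1 = 0 := by ring
    rw [this, zero_pow (by omega)]
    ring
  · intro h; simp at h

/-- finiteness of zero set when `polyP 0 ≠ 0`. -/
lemma polyP_zeroset_finite (m : ℕ) (p : ℕ → ℝ) (h0 : polyP m p 0 ≠ 0) :
    {z : ℝ | polyP m p z = 0}.Finite := by
  set PP : Polynomial ℝ := Polynomial.C (1/2) * ∑ k ∈ Finset.range (m + 1),
    Polynomial.C ((m.choose k : ℝ) * (p k - (k : ℝ) / m)) * Polynomial.X ^ k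
      * (1 - Polynomial.X) ^ (m - k) with hPP
  have heval : ∀ z, PP.eval z = polyP m p z := by
    intro z
    rw [hPP, polyP]
    simp [Polynomial.eval_finset_sum]
    exact Finset.sum_congr rfl (fun k _ => by ring)
  have hne : PP ≠ 0 := by
    intro h
    apply h0
    rw [← heval 0, h, Polynomial.eval_zero]
  have : {z : ℝ | polyP m p z = 0} = {z | PP.IsRoot z} := by
    ext z; simp [Polynomial.IsRoot, heval]
  rw [this]
  exact Polynomial.finite_setOf_isRoot hne

lemma polyQ_continuous (m : ℕ) (p : ℕ → ℝ) : Continuous (polyQ m p) := by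
  unfold polyQ
  apply continuous_finset_sum
  intro k _
  fun_prop

lemma polyQ_mem_Icc (m : ℕ) (p : ℕ → ℝ) (hp : ∀ k ≤ m, p k ∈ Set.Icc (0:ℝ) 1)
    (z : ℝ) (hz : z ∈ Set.Icc (0:ℝ) 1) : polyQ m p z ∈ Set.Icc (0:ℝ) 1 := by
  obtain ⟨hz0, hz1⟩ := hz
  have hB : ∀ k ∈ Finset.range (m+1), 0 ≤ (m.choose k : ℝ) * z ^ k * (1 - z) ^ (m - k) := by
    intro k _
    have : (0:ℝ) ≤ 1 - z := by linarith
    positivity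
  constructor
  · apply Finset.sum_nonneg
    intro k hk
    have hpk := hp k (by simpa [Nat.lt_succ_iff] using hk)
    exact mul_nonneg (hB k hk) hpk.1
  · have h1 : polyQ m p z ≤ ∑ k ∈ Finset.range (m+1), (m.choose k : ℝ) * z ^ k * (1 - z) ^ (m - k) := by
      apply Finset.sum_le_sum
      intro k hk
      have hpk := hp k (by simpa [Nat.lt_succ_iff] using hk)
      nlinarith [hB k hk, hpk.2]
    rw [bernstein_sum_one m z] at h1
    exact h1


lemma telescope_rec (f g c : ℕ → ℝ) (φ : ℝ → ℝ)
    (hrec : ∀ n, f (n + 1) = f n + (g (n + 1) - g n) + c n * φ (f n)) :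
    ∀ a b, a ≤ b → f b = f a + (g b - g a) + ∑ i ∈ Finset.Ico a b, c i * φ (f i) := by
  intro a b hab
  induction b, hab using Nat.le_induction with
  | base => simp
  | succ n hn ih =>
    rw [Finset.sum_Ico_succ_top (by omega), hrec n, ih]
    ring

lemma cross_helper (φ : ℝ → ℝ) (f g c : ℕ → ℝ) (hc : ∀ n, 0 < c n)
    (hrec : ∀ n, f (n + 1) = f n + (g (n + 1) - g n) + c n * φ (f n))
    (u v : ℝ) (huv : u < v)
    (hφpos : ∀ t, u < t → t < v → 0 ≤ φ t)
    (hlow : ∃ᶠ n in atTop, f n < u)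
    (hhigh : ∃ᶠ n in atTop, v < f n)
    (hstep : Tendsto (fun n => f (n + 1) - f n) atTop (𝓝 0))
    (hgc : CauchySeq g) : False := by
  classical
  set ε := (v - u) / 4 with hε
  have hε0 : 0 < ε := by rw [hε]; linarith
  -- step control
  obtain ⟨N1, hN1⟩ : ∃ N, ∀ n ≥ N, |f (n + 1) - f n| < ε := by
    have := (Metric.tendsto_atTop.mp hstep) ε hε0
    obtain ⟨N, hN⟩ := this
    exact ⟨N, fun n hn => by simpa [Real.dist_eq] using hN n hn⟩
  obtain ⟨N2, hN2⟩ : ∃ N, ∀ p ≥ N, ∀ q ≥ N, |g p - g q| < ε := by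
    obtain ⟨N, hN⟩ := (Metric.cauchySeq_iff.mp hgc) ε hε0
    exact ⟨N, fun p hp q hq => by simpa [Real.dist_eq] using hN p hp q hq⟩
  set N := max N1 N2 with hN
  obtain ⟨n₀, hn₀N, hn₀⟩ := (hhigh.and_eventually (eventually_ge_atTop N)).exists
  -- here hn₀N : v < f n₀, hn₀ : N ≤ n₀
  have claim : ∀ n, n₀ ≤ n → u < f n := by
    by_contra hcl
    push_neg at hcl
    have hex : ∃ n, n₀ ≤ n ∧ f n ≤ u := by
      obtain ⟨n, hn1, hn2⟩ := hcl; exact ⟨n, hn1, hn2⟩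
    set τ := Nat.find hex with hτdef
    have hτ1 : n₀ ≤ τ := (Nat.find_spec hex).1
    have hτ2 : f τ ≤ u := (Nat.find_spec hex).2
    have hmin : ∀ k, n₀ ≤ k → k < τ → u < f k := by
      intro k hk1 hk2
      by_contra hk
      exact Nat.find_min hex hk2 ⟨hk1, by linarith⟩
    have hn₀τ : n₀ < τ := by
      rcases Nat.lt_or_ge n₀ τ with h | h
      · exact h
      · exfalso
        have hn₀eq : τ = n₀ := le_antisymm h hτ1
        rw [hn₀eq] at hτ2
        linarith
    -- find the last time ≥ v before τ
    set σ := Nat.findGreatest (fun k => n₀ ≤ k ∧ v ≤ f k) (τ - 1) with hσdef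
    have hσspec : n₀ ≤ σ ∧ v ≤ f σ :=
      Nat.findGreatest_spec (P := fun k => n₀ ≤ k ∧ v ≤ f k) (m := n₀) (by omega)
        ⟨le_refl n₀, le_of_lt hn₀N⟩
    have hσle : σ ≤ τ - 1 := Nat.findGreatest_le _
    have hσmax : ∀ k, σ < k → k ≤ τ - 1 → f k < v := by
      intro k hk1 hk2
      have h := Nat.findGreatest_is_greatest (P := fun k => n₀ ≤ k ∧ v ≤ f k) hk1 hk2
      simp only [not_and, not_le] at h
      exact h (le_trans hσspec.1 (le_of_lt hk1))
    have hσ1τ : σ + 1 ≤ τ := by omega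
    have hmid : ∀ i ∈ Finset.Ico (σ + 1) τ, 0 ≤ c i * φ (f i) := by
      intro i hi
      rw [Finset.mem_Ico] at hi
      have h1 : u < f i := hmin i (by omega) hi.2
      have h2 : f i < v := hσmax i (by omega) (by omega)
      exact mul_nonneg (le_of_lt (hc i)) (hφpos _ h1 h2)
    have htel := telescope_rec f g c φ hrec (σ + 1) τ hσ1τ
    have hsum : 0 ≤ ∑ i ∈ Finset.Ico (σ + 1) τ, c i * φ (f i) := Finset.sum_nonneg hmid
    have hgdiff : |g τ - g (σ + 1)| < ε := hN2 τ (by omega) (σ + 1) (by omega)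
    have hfstep : |f (σ + 1) - f σ| < ε := hN1 σ (by omega)
    have : f τ > v - 2 * ε := by
      have h1 : f (σ + 1) > v - ε := by
        have := abs_lt.mp hfstep
        linarith [hσspec.2]
      have h2 := abs_lt.mp hgdiff
      rw [htel]
      linarith
    rw [hε] at this
    linarith
  -- contradiction with hlow
  obtain ⟨n, hn1, hn2⟩ := (hlow.and_eventually (eventually_ge_atTop n₀)).exists
  exact absurd hn1 (not_lt.mpr (le_of_lt (claim n hn2)))

lemma det1 (φ : ℝ → ℝ) (hφ : Continuous φ) (hfin : {z : ℝ | φ z = 0}.Finite)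
    (f g c : ℕ → ℝ) (hc : ∀ n, 0 < c n)
    (hcdiv : Tendsto (fun n => ∑ i ∈ Finset.range n, c i) atTop atTop)
    (hf01 : ∀ n, f n ∈ Set.Icc (0 : ℝ) 1)
    (hrec : ∀ n, f (n + 1) = f n + (g (n + 1) - g n) + c n * φ (f n))
    (hstep : Tendsto (fun n => f (n + 1) - f n) atTop (𝓝 0))
    (hg : ∃ l, Tendsto g atTop (𝓝 l)) :
    ∃ z, Tendsto f atTop (𝓝 z) ∧ φ z = 0 ∧ z ∈ Set.Icc (0 : ℝ) 1 := by
  obtain ⟨lg, hlg⟩ := hg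
  have hgc : CauchySeq g := hlg.cauchySeq
  have hBa : IsBoundedUnder (· ≤ ·) atTop f :=
    isBoundedUnder_of ⟨1, fun n => (hf01 n).2⟩
  have hBb : IsBoundedUnder (· ≥ ·) atTop f :=
    isBoundedUnder_of ⟨0, fun n => (hf01 n).1⟩
  set l := liminf f atTop with hldef
  set L := limsup f atTop with hLdef
  have hlL : l ≤ L := liminf_le_limsup hBa hBb
  -- first : liminf = limsup
  have heq : l = L := by
    by_contra hne
    have hlt : l < L := lt_of_le_of_ne hlL hne
    have hIooInf : (Set.Ioo l L).Infinite := Set.infinite_coe_iff.mp (Set.Ioo.infinite hlt)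
    obtain ⟨z₀, hz₀⟩ := (hIooInf.diff hfin).nonempty
    obtain ⟨hz₀mem, hz₀ne'⟩ := hz₀
    have hz₀ne : φ z₀ ≠ 0 := by simpa using hz₀ne'
    -- continuity: pick δ with sign constancy
    obtain ⟨δ, hδ0, hδ⟩ : ∃ δ > 0, ∀ t, |t - z₀| < δ → |φ t - φ z₀| < |φ z₀| := by
      have h := Metric.continuousAt_iff.mp (hφ.continuousAt (x := z₀)) |φ z₀| (abs_pos.mpr hz₀ne)
      obtain ⟨δ, hδ0, hδ⟩ := h
      refine ⟨δ, hδ0, fun t ht => ?_⟩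
      have h2 := hδ (x := t) (by simpa [Real.dist_eq] using ht)
      simpa [Real.dist_eq] using h2
    set ε₀ := min (δ / 2) (min ((z₀ - l) / 2) ((L - z₀) / 2)) with hε₀def
    have hε₀0 : 0 < ε₀ := by
      apply lt_min (by linarith)
      exact lt_min (by simp at hz₀mem ⊢; linarith [hz₀mem.1]) (by simp at hz₀mem ⊢; linarith [hz₀mem.2])
    set u := z₀ - ε₀ with hu
    set v := z₀ + ε₀ with hv
    have hlu : l < u := by
      have : ε₀ ≤ (z₀ - l) / 2 := le_trans (min_le_right _ _) (min_le_left _ _)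
      simp only [hu]
      simp at hz₀mem
      linarith [hz₀mem.1]
    have hvL : v < L := by
      have : ε₀ ≤ (L - z₀) / 2 := le_trans (min_le_right _ _) (min_le_right _ _)
      simp only [hv]
      simp at hz₀mem
      linarith [hz₀mem.2]
    have huv : u < v := by simp only [hu, hv]; linarith
    have hsign : ∀ t, u < t → t < v → (0 < φ z₀ → 0 < φ t) ∧ (φ z₀ < 0 → φ t < 0) := by
      intro t h1 h2
      have habs : |t - z₀| < δ := by
        rw [abs_lt]
        have : ε₀ ≤ δ / 2 := min_le_left _ _
        constructor <;> simp only [hu, hv] at h1 h2 <;> linarith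
      have habs2 := abs_lt.mp (hδ t habs)
      constructor
      · intro hsgn
        rw [abs_of_pos hsgn] at habs2
        linarith [habs2.1]
      · intro hsgn
        rw [abs_of_neg hsgn] at habs2
        linarith [habs2.2]
    have hlow : ∃ᶠ n in atTop, f n < u :=
      frequently_lt_of_liminf_lt hBa.isCoboundedUnder_ge hlu
    have hhigh : ∃ᶠ n in atTop, v < f n :=
      frequently_lt_of_lt_limsup hBb.isCoboundedUnder_le hvL
    rcases lt_or_gt_of_ne hz₀ne with hneg | hpos
    · -- φ z₀ < 0 : mirror
      have : False := by
        apply cross_helper (fun x => -φ (-x)) (fun n => -f n) (fun n => -g n) c hc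
          (u := -v) (v := -u)
        · intro n
          simp only [neg_neg]
          linarith [hrec n]
        · linarith
        · intro t h1 h2
          have h1' : u < -t := by linarith
          have h2' : -t < v := by linarith
          have := (hsign (-t) h1' h2').2 hneg
          linarith
        · exact hhigh.mono fun n hn => by exact neg_lt_neg hn
        · exact hlow.mono fun n hn => by exact neg_lt_neg hn
        · have : (fun n => (-f (n+1)) - (-f n)) = fun n => -(f (n+1) - f n) := by
            funext n; ring
          rw [this]
          simpa using hstep.neg
        · exact hgc.neg
      exact this
    · exact cross_helper φ f g c hc hrec u v huv
        (fun t h1 h2 => le_of_lt ((hsign t h1 h2).1 hpos)) hlow hhigh hstep hgc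
  -- convergence
  have hT : Tendsto f atTop (𝓝 l) :=
    tendsto_of_liminf_eq_limsup rfl heq.symm hBa hBb
  refine ⟨l, hT, ?_, ?_⟩
  · -- φ l = 0
    by_contra hφl
    have hcomp : Tendsto (fun n => φ (f n)) atTop (𝓝 (φ l)) := (hφ.tendsto l).comp hT
    -- g bounded eventually
    obtain ⟨Ng, hNg⟩ := (Metric.tendsto_atTop.mp hlg) 1 one_pos
    rcases lt_or_gt_of_ne hφl with hneg | hpos
    · -- φ l < 0 ⇒ f n → -∞ contradiction with f ≥ 0
      have hev : ∀ᶠ n in atTop, φ (f n) < φ l / 2 :=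
        hcomp.eventually (eventually_lt_nhds (by linarith))
      obtain ⟨N, hN⟩ := (hev.and (eventually_ge_atTop Ng)).exists_forall_of_atTop
      -- choose n with big sum
      have hsumdiv : Tendsto (fun n => ∑ i ∈ Finset.Ico N n, c i) atTop atTop := by
        have : ∀ n ≥ N, ∑ i ∈ Finset.Ico N n, c i
            = (∑ i ∈ Finset.range n, c i) - ∑ i ∈ Finset.range N, c i := by
          intro n hn
          rw [Finset.range_eq_Ico, Finset.sum_Ico_eq_sub _ hn, Finset.range_eq_Ico]
        apply Tendsto.congr' (EventuallyEq.symm (eventually_atTop.mpr ⟨N, this⟩))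
        exact tendsto_atTop_add_const_right _ _ hcdiv
      have hmul : Tendsto (fun n => (-φ l / 2) * ∑ i ∈ Finset.Ico N n, c i) atTop atTop :=
        Tendsto.const_mul_atTop (by linarith) hsumdiv
      have hbig : ∀ᶠ n in atTop, (-φ l / 2) * ∑ i ∈ Finset.Ico N n, c i > 3 + |g N| + |lg| :=
        hmul.eventually_gt_atTop _
      obtain ⟨n, hn1, hn2⟩ := ((hbig.and (eventually_ge_atTop (max N Ng))).exists)
      have hnN : N ≤ n := le_trans (le_max_left _ _) hn2
      have htel := telescope_rec f g c φ (fun k => hrec k) N n hnN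
      have hsumle : ∑ i ∈ Finset.Ico N n, c i * φ (f i)
          ≤ (φ l / 2) * ∑ i ∈ Finset.Ico N n, c i := by
        rw [Finset.mul_sum]
        apply Finset.sum_le_sum
        intro i hi
        rw [Finset.mem_Ico] at hi
        have := (hN i hi.1).1
        have hci := hc i
        nlinarith
      have hgn : |g n - lg| < 1 := by
        have := hNg n (le_trans (le_max_right _ _) hn2)
        simpa [Real.dist_eq] using this
      have hf0 : 0 ≤ f n := (hf01 n).1
      have hfN : f N ≤ 1 := (hf01 N).2
      have h1 := abs_lt.mp hgn
      have h2 : -(|g N|) ≤ g N := neg_abs_le _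
      have h3 : g N ≤ |g N| := le_abs_self _
      have h4 : -(|lg|) ≤ lg := neg_abs_le _
      have h5 : lg ≤ |lg| := le_abs_self _
      rw [htel] at hf0
      nlinarith
    · -- φ l > 0 ⇒ f n → ∞
      have hev : ∀ᶠ n in atTop, φ (f n) > φ l / 2 :=
        hcomp.eventually (eventually_gt_nhds (by linarith))
      obtain ⟨N, hN⟩ := (hev.and (eventually_ge_atTop Ng)).exists_forall_of_atTop
      have hsumdiv : Tendsto (fun n => ∑ i ∈ Finset.Ico N n, c i) atTop atTop := by
        have : ∀ n ≥ N, ∑ i ∈ Finset.Ico N n, c i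
            = (∑ i ∈ Finset.range n, c i) - ∑ i ∈ Finset.range N, c i := by
          intro n hn
          rw [Finset.range_eq_Ico, Finset.sum_Ico_eq_sub _ hn, Finset.range_eq_Ico]
        apply Tendsto.congr' (EventuallyEq.symm (eventually_atTop.mpr ⟨N, this⟩))
        exact tendsto_atTop_add_const_right _ _ hcdiv
      have hmul : Tendsto (fun n => (φ l / 2) * ∑ i ∈ Finset.Ico N n, c i) atTop atTop :=
        Tendsto.const_mul_atTop (by linarith) hsumdiv
      have hbig : ∀ᶠ n in atTop, (φ l / 2) * ∑ i ∈ Finset.Ico N n, c i > 3 + |g N| + |lg| :=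
        hmul.eventually_gt_atTop _
      obtain ⟨n, hn1, hn2⟩ := ((hbig.and (eventually_ge_atTop (max N Ng))).exists)
      have hnN : N ≤ n := le_trans (le_max_left _ _) hn2
      have htel := telescope_rec f g c φ (fun k => hrec k) N n hnN
      have hsumge : (φ l / 2) * ∑ i ∈ Finset.Ico N n, c i
          ≤ ∑ i ∈ Finset.Ico N n, c i * φ (f i) := by
        rw [Finset.mul_sum]
        apply Finset.sum_le_sum
        intro i hi
        rw [Finset.mem_Ico] at hi
        have := (hN i hi.1).1
        have hci := hc i
        nlinarith
      have hgn : |g n - lg| < 1 := by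
        have := hNg n (le_trans (le_max_right _ _) hn2)
        simpa [Real.dist_eq] using this
      have hf1 : f n ≤ 1 := (hf01 n).2
      have hfN : 0 ≤ f N := (hf01 N).1
      have h1 := abs_lt.mp hgn
      have h2 : -(|g N|) ≤ g N := neg_abs_le _
      have h3 : g N ≤ |g N| := le_abs_self _
      have h4 : -(|lg|) ≤ lg := neg_abs_le _
      have h5 : lg ≤ |lg| := le_abs_self _
      rw [htel] at hf1
      nlinarith
  · constructor
    · exact ge_of_tendsto hT (Eventually.of_forall fun n => (hf01 n).1)
    · exact le_of_tendsto hT (Eventually.of_forall fun n => (hf01 n).2)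


lemma det2 (c q g f : ℕ → ℝ) (z l : ℝ)
    (hc : ∀ n, 0 < c n) (hc1 : ∀ n, c n ≤ 1)
    (hcdiv : Tendsto (fun n => ∑ i ∈ Finset.range n, c i) atTop atTop)
    (hq : Tendsto q atTop (𝓝 z)) (hg : Tendsto g atTop (𝓝 l))
    (hrec : ∀ n, f (n + 1) = f n + (g (n + 1) - g n) + c n * (q n - f n)) :
    Tendsto f atTop (𝓝 z) := by
  set h : ℕ → ℝ := fun n => f n - z - (g n - l) with hh
  set ρ : ℕ → ℝ := fun n => (q n - z) - (g n - l) with hρ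
  have hρ0 : Tendsto ρ atTop (𝓝 0) := by
    have h1 : Tendsto (fun n => q n - z) atTop (𝓝 0) := by
      simpa using hq.sub_const z
    have h2 : Tendsto (fun n => g n - l) atTop (𝓝 0) := by
      simpa using hg.sub_const l
    simpa using h1.sub h2
  have hrec' : ∀ n, h (n + 1) = (1 - c n) * h n + c n * ρ n := by
    intro n
    simp only [hh, hρ]
    rw [hrec n]
    ring
  -- enough: h → 0
  have hh0 : Tendsto h atTop (𝓝 0) := by
    rw [Metric.tendsto_atTop]
    intro ε hε
    obtain ⟨N, hN⟩ := (Metric.tendsto_atTop.mp hρ0) (ε / 4) (by linarith)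
    -- for n ≥ N : |h n| ≤ ε/4 + |h N| * ∏_{i ∈ Ico N n} (1 - c i)
    have key : ∀ n, N ≤ n → |h n| ≤ ε / 4 + |h N| * ∏ i ∈ Finset.Ico N n, (1 - c i) := by
      intro n hn
      induction n, hn using Nat.le_induction with
      | base => simp; linarith
      | succ n hn ih =>
        have hρn : |ρ n| < ε / 4 := by
          have := hN n hn
          simpa [Real.dist_eq] using this
        have h1 : |h (n + 1)| ≤ (1 - c n) * |h n| + c n * |ρ n| := by
          rw [hrec' n]
          calc |(1 - c n) * h n + c n * ρ n| ≤ |(1 - c n) * h n| + |c n * ρ n| := abs_add_le _ _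
            _ = (1 - c n) * |h n| + c n * |ρ n| := by
                rw [abs_mul, abs_mul, abs_of_nonneg (by linarith [hc1 n]),
                  abs_of_nonneg (le_of_lt (hc n))]
        have hcn0 : 0 ≤ 1 - c n := by linarith [hc1 n]
        have hprod : ∏ i ∈ Finset.Ico N (n + 1), (1 - c i)
            = (∏ i ∈ Finset.Ico N n, (1 - c i)) * (1 - c n) := by
          rw [Finset.prod_Ico_succ_top hn]
        rw [hprod]
        have hprodnn : 0 ≤ ∏ i ∈ Finset.Ico N n, (1 - c i) :=
          Finset.prod_nonneg fun i _ => by linarith [hc1 i]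
        have habsN : 0 ≤ |h N| := abs_nonneg _
        calc |h (n + 1)| ≤ (1 - c n) * |h n| + c n * |ρ n| := h1
          _ ≤ (1 - c n) * (ε / 4 + |h N| * ∏ i ∈ Finset.Ico N n, (1 - c i)) + c n * (ε / 4) := by
              have := le_of_lt hρn
              have hcn := hc n
              nlinarith [ih]
          _ ≤ ε / 4 + |h N| * ((∏ i ∈ Finset.Ico N n, (1 - c i)) * (1 - c n)) := by
              have hcn := hc n
              nlinarith
    -- the product tends to 0
    have hprod0 : Tendsto (fun n => ∏ i ∈ Finset.Ico N n, (1 - c i)) atTop (𝓝 0) := by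
      have hb1 : ∀ n, (0:ℝ) ≤ ∏ i ∈ Finset.Ico N n, (1 - c i) :=
        fun n => Finset.prod_nonneg fun i _ => by linarith [hc1 i]
      have hb2 : ∀ n, ∏ i ∈ Finset.Ico N n, (1 - c i) ≤ Real.exp (-(∑ i ∈ Finset.Ico N n, c i)) := by
        intro n
        rw [show -∑ i ∈ Finset.Ico N n, c i = ∑ i ∈ Finset.Ico N n, -(c i) from by
          rw [Finset.sum_neg_distrib], Real.exp_sum]
        apply Finset.prod_le_prod
        · intro i _; linarith [hc1 i]
        · intro i _
          have := Real.add_one_le_exp (-(c i))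
          linarith
      have hsumdiv : Tendsto (fun n => ∑ i ∈ Finset.Ico N n, c i) atTop atTop := by
        have heq : ∀ n ≥ N, ∑ i ∈ Finset.Ico N n, c i
            = (∑ i ∈ Finset.range n, c i) - ∑ i ∈ Finset.range N, c i := by
          intro n hn
          rw [Finset.range_eq_Ico, Finset.sum_Ico_eq_sub _ hn, Finset.range_eq_Ico]
        apply Tendsto.congr' (EventuallyEq.symm (eventually_atTop.mpr ⟨N, heq⟩))
        exact tendsto_atTop_add_const_right _ _ hcdiv
      have hexp : Tendsto (fun n => Real.exp (-(∑ i ∈ Finset.Ico N n, c i))) atTop (𝓝 0) :=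
        Real.tendsto_exp_neg_atTop_nhds_zero.comp hsumdiv
      exact squeeze_zero hb1 hb2 hexp
    have hsmall : ∀ᶠ n in atTop, |h N| * ∏ i ∈ Finset.Ico N n, (1 - c i) < ε / 4 := by
      have : Tendsto (fun n => |h N| * ∏ i ∈ Finset.Ico N n, (1 - c i)) atTop (𝓝 0) := by
        simpa using hprod0.const_mul (|h N|)
      exact this.eventually (eventually_lt_nhds (by linarith : (0:ℝ) < ε / 4)) |>.mono
        fun n hn => by simpa using hn
    obtain ⟨M, hM⟩ := (hsmall.and (eventually_ge_atTop N)).exists_forall_of_atTop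
    refine ⟨M, fun n hn => ?_⟩
    have h1 := key n (hM n hn).2
    have h2 := (hM n hn).1
    rw [Real.dist_eq]
    simp only [sub_zero]
    calc |h n| ≤ ε / 4 + |h N| * ∏ i ∈ Finset.Ico N n, (1 - c i) := h1
      _ < ε / 4 + ε / 4 := by linarith
      _ < ε := by linarith
  -- conclude
  have : f = fun n => h n + z + (g n - l) := by
    funext n; simp [hh]; ring
  rw [this]
  have := (hh0.add_const z).add (by simpa using hg.sub_const l)
  simpa using this


variable {Ω : Type} [MeasurableSpace Ω]

/-- Integrability from an a.e. bound, on a probability space. -/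
lemma integrable_of_ae_bound {μ : Measure Ω} [IsProbabilityMeasure μ] {f : Ω → ℝ} {C : ℝ}
    (hm : AEStronglyMeasurable f μ) (h : ∀ᵐ ω ∂μ, |f ω| ≤ C) : Integrable f μ :=
  ⟨hm, HasFiniteIntegral.of_bounded (C := C)
    (h.mono fun ω hω => by simpa [Real.norm_eq_abs] using hω)⟩

/-- A martingale whose increments are square-summably bounded converges a.s. -/
lemma martingale_ae_tendsto_of_sq_bdd {μ : Measure Ω} [IsProbabilityMeasure μ]
    (ℱ : Filtration ℕ ‹MeasurableSpace Ω›) (f : ℕ → Ω → ℝ)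
    (hf : Martingale f ℱ μ) (b : ℕ → ℝ) (K₀ B : ℝ)
    (hb : ∀ n, ∀ᵐ ω ∂μ, |f (n + 1) ω - f n ω| ≤ b n)
    (hbB : ∀ n, ∑ i ∈ Finset.range n, (b i) ^ 2 ≤ B)
    (h0 : ∀ᵐ ω ∂μ, |f 0 ω| ≤ K₀) :
    ∀ᵐ ω ∂μ, ∃ ll, Tendsto (fun n => f n ω) atTop (𝓝 ll) := by
  have hint : ∀ n, Integrable (f n) μ := hf.integrable
  have hmeas : ∀ n, AEStronglyMeasurable (f n) μ := fun n => (hint n).1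
  -- pointwise a.e. bound on each f n
  have hptbd : ∀ n, ∀ᵐ ω ∂μ, |f n ω| ≤ K₀ + ∑ i ∈ Finset.range n, b i := by
    intro n
    induction n with
    | zero => simpa using h0
    | succ n ih =>
      filter_upwards [ih, hb n] with ω h1 h2
      rw [Finset.sum_range_succ]
      have habs : |f (n + 1) ω| ≤ |f n ω| + |f (n + 1) ω - f n ω| := by
        calc |f (n + 1) ω| = |f n ω + (f (n + 1) ω - f n ω)| := by congr 1; ring
          _ ≤ |f n ω| + |f (n + 1) ω - f n ω| := abs_add_le _ _
      linarith
  -- second moments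
  have hsq : ∀ n, Integrable (fun ω => (f n ω) ^ 2) μ := by
    intro n
    apply integrable_of_ae_bound (C := (K₀ + |∑ i ∈ Finset.range n, b i|) ^ 2)
      (((hmeas n).mul (hmeas n)).congr (by
        filter_upwards with ω; simp only [Pi.mul_apply]; ring))
    filter_upwards [hptbd n] with ω hω
    rw [abs_pow, sq_abs]
    calc f n ω ^ 2 = |f n ω| ^ 2 := (sq_abs _).symm
      _ ≤ (K₀ + |∑ i ∈ Finset.range n, b i|) ^ 2 := by
          apply pow_le_pow_left₀ (abs_nonneg _)
          linarith [le_abs_self (∑ i ∈ Finset.range n, b i)]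
  have hmom : ∀ n, ∫ ω, (f n ω) ^ 2 ∂μ ≤ K₀ ^ 2 + ∑ i ∈ Finset.range n, (b i) ^ 2 := by
    intro n
    induction n with
    | zero =>
      simp only [Finset.range_zero, Finset.sum_empty, add_zero]
      have : ∫ ω, (f 0 ω) ^ 2 ∂μ ≤ ∫ _ω, K₀ ^ 2 ∂μ := by
        apply integral_mono_ae (hsq 0) (integrable_const _)
        filter_upwards [h0] with ω hω
        nlinarith [abs_nonneg (f 0 ω), abs_le.mp hω]
      simpa using this
    | succ n ih =>
      -- orthogonality of increments
      have hd : Integrable (fun ω => f (n + 1) ω - f n ω) μ := (hint (n + 1)).sub (hint n)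
      have hdsq : Integrable (fun ω => (f (n + 1) ω - f n ω) ^ 2) μ := by
        apply integrable_of_ae_bound (C := (b n) ^ 2) ((hd.1.mul hd.1).congr (by
          filter_upwards with ω; simp only [Pi.mul_apply]; ring))
        filter_upwards [hb n] with ω hω
        rw [abs_pow, sq_abs]
        calc (f (n + 1) ω - f n ω) ^ 2 = |f (n + 1) ω - f n ω| ^ 2 := (sq_abs _).symm
          _ ≤ |b n| ^ 2 := by
              apply pow_le_pow_left₀ (abs_nonneg _)
              exact le_trans hω (le_abs_self _)
          _ = (b n) ^ 2 := sq_abs _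
      have hmul : Integrable (fun ω => f n ω * (f (n + 1) ω - f n ω)) μ :=
        hd.bdd_mul (hmeas n) (by
          filter_upwards [hptbd n] with ω hω using by
            simpa [Real.norm_eq_abs] using hω)
      have hmul' : Integrable (fun ω => f n ω * f (n + 1) ω) μ :=
        (hint (n+1)).bdd_mul (hmeas n) (by
          filter_upwards [hptbd n] with ω hω using by
            simpa [Real.norm_eq_abs] using hω)
      -- key : ∫ f n * (f (n+1) - f n) = 0
      have horth : ∫ ω, f n ω * (f (n + 1) ω - f n ω) ∂μ = 0 := by
        have h1 : (fun ω => f n ω * (f (n + 1) ω - f n ω))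
            = (fun ω => f n ω * f (n + 1) ω - f n ω * f n ω) := by
          funext ω; ring
        have hcond : μ[f n * f (n + 1) | ℱ n] =ᵐ[μ] f n * f n := by
          have hpull : μ[f n * f (n + 1) | ℱ n] =ᵐ[μ] f n * μ[f (n + 1) | ℱ n] :=
            condExp_mul_of_stronglyMeasurable_left (μ := μ) (m := ℱ n)
              (hf.stronglyAdapted n) hmul' (hint (n + 1))
          have hmart := hf.2 n (n + 1) (Nat.le_succ n)
          refine hpull.trans ?_
          filter_upwards [hmart] with ω hω
          simp only [Pi.mul_apply]
          rw [hω]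
        have h2 : ∫ ω, f n ω * f (n + 1) ω ∂μ = ∫ ω, f n ω * f n ω ∂μ := by
          have h2a : ∫ ω, (f n * f (n + 1)) ω ∂μ = ∫ ω, (f n * f n) ω ∂μ := by
            rw [← integral_condExp (μ := μ) (f := f n * f (n + 1)) (ℱ.le n)]
            exact integral_congr_ae hcond
          simpa [Pi.mul_apply] using h2a
        rw [h1, integral_sub hmul' (by
          apply (hint n).bdd_mul (hmeas n) (by
            filter_upwards [hptbd n] with ω hω using by
              simpa [Real.norm_eq_abs] using hω)), h2, sub_self]
      have hexpand : ∫ ω, (f (n + 1) ω) ^ 2 ∂μ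
          = ∫ ω, (f n ω) ^ 2 ∂μ + 2 * ∫ ω, f n ω * (f (n + 1) ω - f n ω) ∂μ
            + ∫ ω, (f (n + 1) ω - f n ω) ^ 2 ∂μ := by
        have : (fun ω => (f (n + 1) ω) ^ 2)
            = fun ω => (f n ω) ^ 2 + 2 * (f n ω * (f (n + 1) ω - f n ω))
              + (f (n + 1) ω - f n ω) ^ 2 := by
          funext ω; ring
        rw [this, integral_add (by exact (hsq n).add (hmul.const_mul 2)) hdsq,
          integral_add (hsq n) (hmul.const_mul 2), integral_const_mul]
      have hdsqle : ∫ ω, (f (n + 1) ω - f n ω) ^ 2 ∂μ ≤ (b n) ^ 2 := by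
        have : ∫ ω, (f (n + 1) ω - f n ω) ^ 2 ∂μ ≤ ∫ _ω, (b n) ^ 2 ∂μ := by
          apply integral_mono_ae hdsq (integrable_const _)
          filter_upwards [hb n] with ω hω
          nlinarith [abs_nonneg (f (n+1) ω - f n ω), abs_le.mp hω]
        simpa using this
      rw [hexpand, horth, Finset.sum_range_succ]
      linarith
  -- L¹ bound
  set R : ℝ := (K₀ ^ 2 + B + 1) / 2 with hR
  have hl1 : ∀ n, eLpNorm (f n) 1 μ ≤ ENNReal.ofReal R := by
    intro n
    have h1 : ∫ ω, |f n ω| ∂μ ≤ R := by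
      have h2 : ∫ ω, |f n ω| ∂μ ≤ ∫ ω, ((f n ω) ^ 2 + 1) / 2 ∂μ := by
        refine integral_mono_ae (hint n).abs ?_ ?_
        · exact ((hsq n).add (integrable_const 1)).div_const 2
        · filter_upwards with ω
          nlinarith [sq_nonneg (|f n ω| - 1), sq_abs (f n ω)]
      have h3 : ∫ ω, ((f n ω) ^ 2 + 1) / 2 ∂μ = ((∫ ω, (f n ω) ^ 2 ∂μ) + 1) / 2 := by
        rw [integral_div, integral_add (hsq n) (integrable_const 1)]
        simp
      rw [h3] at h2
      have := hmom n
      have := hbB n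
      rw [hR]
      linarith
    calc eLpNorm (f n) 1 μ = ∫⁻ ω, ‖f n ω‖ₑ ∂μ := eLpNorm_one_eq_lintegral_enorm
      _ = ENNReal.ofReal (∫ ω, ‖f n ω‖ ∂μ) := (ofReal_integral_norm_eq_lintegral_enorm (hint n)).symm
      _ ≤ ENNReal.ofReal R := by
          apply ENNReal.ofReal_le_ofReal
          simpa [Real.norm_eq_abs] using h1
  have := hf.submartingale.exists_ae_tendsto_of_bdd (R := (ENNReal.ofReal R).toNNReal)
    (fun n => by
      have := hl1 n
      rwa [ENNReal.coe_toNNReal (by simp)])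
  exact this

section Plumbing

variable {Ω : Type} [MeasurableSpace Ω]

namespace PAProcess

variable (P : PAProcess Ω)

/-- Real-valued total degree. -/
def sR (n : ℕ) : ℝ := (P.X0 : ℝ) + P.Y0 + 2 * P.m * n

/-- Real-valued normalized red degree. -/
def xf (n : ℕ) (ω : Ω) : ℝ := (P.X n ω : ℝ) / P.sR n

def Ered (n k : ℕ) : Set Ω :=
  {ω | P.A (n + 1) ω = P.A n ω + 1 ∧ P.X (n + 1) ω = P.X n ω + k + P.m}

def Eblue (n k : ℕ) : Set Ω :=
  {ω | P.A (n + 1) ω = P.A n ω ∧ P.X (n + 1) ω = P.X n ω + k}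

def Aup (n : ℕ) : Set Ω := {ω | P.A (n + 1) ω = P.A n ω + 1}

def Gn (n : ℕ) : Set Ω := ⋃ k ∈ Finset.range (P.m + 1), (P.Ered n k ∪ P.Eblue n k)

lemma measurable_A (n : ℕ) : Measurable (P.A n) := (P.adaptedA n).mono (P.F.le n) le_rfl

lemma measurable_X (n : ℕ) : Measurable (P.X n) := (P.adaptedX n).mono (P.F.le n) le_rfl

lemma measurable_Acast (n : ℕ) : Measurable (fun ω => (P.A n ω : ℝ)) :=
  measurable_from_top.comp (P.measurable_A n)

lemma measurable_Xcast (n : ℕ) : Measurable (fun ω => (P.X n ω : ℝ)) :=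
  measurable_from_top.comp (P.measurable_X n)

lemma measurableSet_Ered (n k : ℕ) : MeasurableSet (P.Ered n k) := by
  have h1 : MeasurableSet {ω | P.A (n + 1) ω = P.A n ω + 1} :=
    measurableSet_eq_fun (P.measurable_A (n + 1))
      ((P.measurable_A n).add_const 1)
  have h2 : MeasurableSet {ω | P.X (n + 1) ω = P.X n ω + k + P.m} :=
    measurableSet_eq_fun (P.measurable_X (n + 1))
      (((P.measurable_X n).add_const k).add_const P.m)
  have : P.Ered n k = {ω | P.A (n + 1) ω = P.A n ω + 1}
      ∩ {ω | P.X (n + 1) ω = P.X n ω + k + P.m} := rfl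
  rw [this]; exact h1.inter h2

lemma measurableSet_Eblue (n k : ℕ) : MeasurableSet (P.Eblue n k) := by
  have h1 : MeasurableSet {ω | P.A (n + 1) ω = P.A n ω} :=
    measurableSet_eq_fun (P.measurable_A (n + 1)) (P.measurable_A n)
  have h2 : MeasurableSet {ω | P.X (n + 1) ω = P.X n ω + k} :=
    measurableSet_eq_fun (P.measurable_X (n + 1))
      ((P.measurable_X n).add_const k)
  have : P.Eblue n k = {ω | P.A (n + 1) ω = P.A n ω}
      ∩ {ω | P.X (n + 1) ω = P.X n ω + k} := rfl
  rw [this]; exact h1.inter h2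

lemma measurableSet_Aup (n : ℕ) : MeasurableSet (P.Aup n) :=
  measurableSet_eq_fun (P.measurable_A (n + 1)) ((P.measurable_A n).add_const 1)

lemma measurableSet_Gn (n : ℕ) : MeasurableSet (P.Gn n) := by
  apply MeasurableSet.biUnion (Finset.range (P.m + 1)).countable_toSet
  intro k _
  exact (P.measurableSet_Ered n k).union (P.measurableSet_Eblue n k)

-- disjointness facts
lemma red_red {n k j : ℕ} {ω : Ω} (h1 : ω ∈ P.Ered n k) (h2 : ω ∈ P.Ered n j) : k = j := by
  obtain ⟨_, hx1⟩ := h1; obtain ⟨_, hx2⟩ := h2; omega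

lemma blue_blue {n k j : ℕ} {ω : Ω} (h1 : ω ∈ P.Eblue n k) (h2 : ω ∈ P.Eblue n j) : k = j := by
  obtain ⟨_, hx1⟩ := h1; obtain ⟨_, hx2⟩ := h2; omega

lemma red_blue {n k j : ℕ} {ω : Ω} (h1 : ω ∈ P.Ered n k) (h2 : ω ∈ P.Eblue n j) : False := by
  obtain ⟨ha1, _⟩ := h1; obtain ⟨ha2, _⟩ := h2; omega

/-- The fundamental pointwise "partition" sum computation: for any real-valued weights. -/
lemma sum_event_weights {n : ℕ} {ω : Ω} (u v : ℕ → ℝ)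
    {k₀ : ℕ} (hk₀ : k₀ ∈ Finset.range (P.m + 1)) :
    (ω ∈ P.Ered n k₀ → (∑ k ∈ Finset.range (P.m + 1),
        (u k * (P.Ered n k).indicator (fun _ => (1 : ℝ)) ω
          + v k * (P.Eblue n k).indicator (fun _ => (1 : ℝ)) ω)) = u k₀)
    ∧ (ω ∈ P.Eblue n k₀ → (∑ k ∈ Finset.range (P.m + 1),
        (u k * (P.Ered n k).indicator (fun _ => (1 : ℝ)) ω
          + v k * (P.Eblue n k).indicator (fun _ => (1 : ℝ)) ω)) = v k₀) := by
  constructor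
  · intro hred
    rw [Finset.sum_eq_single_of_mem k₀ hk₀]
    · rw [Set.indicator_of_mem hred, Set.indicator_of_notMem (fun hb => P.red_blue hred hb)]
      ring
    · intro j _ hj
      rw [Set.indicator_of_notMem (fun hr => hj ((P.red_red hr hred))),
        Set.indicator_of_notMem (fun hb => P.red_blue hred hb)]
      ring
  · intro hblue
    rw [Finset.sum_eq_single_of_mem k₀ hk₀]
    · rw [Set.indicator_of_mem hblue, Set.indicator_of_notMem (fun hr => P.red_blue hr hblue)]
      ring
    · intro j _ hj
      rw [Set.indicator_of_notMem (fun hr => P.red_blue hr hblue),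
        Set.indicator_of_notMem (fun hb => hj ((P.blue_blue hb hblue)))]
      ring

end PAProcess

end Plumbing


section Plumbing2

variable {Ω : Type} [MeasurableSpace Ω]

/-- sum of a.e.-equal functions -/
lemma EventuallyEq.finsetSum {α ι E : Type*} [AddCommMonoid E] {l : Filter α}
    (s : Finset ι) (f g : ι → α → E) (h : ∀ i ∈ s, f i =ᶠ[l] g i) :
    (fun ω => ∑ i ∈ s, f i ω) =ᶠ[l] (fun ω => ∑ i ∈ s, g i ω) := by
  have h' : ∀ᶠ ω in l, ∀ i ∈ s, f i ω = g i ω := (eventually_all_finset s).mpr h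
  filter_upwards [h'] with ω hω
  exact Finset.sum_congr rfl hω

lemma alg_total (m : ℕ) (p : ℕ → ℝ) (x : ℝ) :
    ∑ k ∈ Finset.range (m + 1),
      ((m.choose k : ℝ) * x ^ k * (1 - x) ^ (m - k) * p k
        + (m.choose k : ℝ) * x ^ k * (1 - x) ^ (m - k) * (1 - p k)) = 1 := by
  calc ∑ k ∈ Finset.range (m + 1),
      ((m.choose k : ℝ) * x ^ k * (1 - x) ^ (m - k) * p k
        + (m.choose k : ℝ) * x ^ k * (1 - x) ^ (m - k) * (1 - p k))
      = ∑ k ∈ Finset.range (m + 1), (m.choose k : ℝ) * x ^ k * (1 - x) ^ (m - k) :=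
        Finset.sum_congr rfl fun k _ => by ring
    _ = 1 := bernstein_sum_one m x

namespace PAProcess

variable (P : PAProcess Ω)

lemma sR_pos (hX0 : 0 < P.X0) (n : ℕ) : 0 < P.sR n := by
  have h1 : (1 : ℝ) ≤ (P.X0 : ℝ) := by exact_mod_cast hX0
  have h2 : (0 : ℝ) ≤ (P.Y0 : ℝ) := Nat.cast_nonneg _
  have h3 : (0 : ℝ) ≤ 2 * (P.m : ℝ) * n := by positivity
  unfold sR; linarith

lemma sR_succ (n : ℕ) : P.sR (n + 1) = P.sR n + 2 * P.m := by
  unfold sR; push_cast; ring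

lemma sR_ge (hX0 : 0 < P.X0) (n : ℕ) : (n : ℝ) + 1 ≤ P.sR (n + 1) := by
  have h1 : (1 : ℝ) ≤ (P.X0 : ℝ) := by exact_mod_cast hX0
  have h2 : (0 : ℝ) ≤ (P.Y0 : ℝ) := Nat.cast_nonneg _
  have h4 : (1 : ℝ) ≤ (P.m : ℝ) := by exact_mod_cast P.hm
  have h5 : (0 : ℝ) ≤ (n : ℝ) := Nat.cast_nonneg _
  unfold sR
  push_cast
  nlinarith

lemma xf_mem_Icc (hX0 : 0 < P.X0) (n : ℕ) (ω : Ω) : P.xf n ω ∈ Set.Icc (0 : ℝ) 1 := by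
  have hs := P.sR_pos hX0 n
  constructor
  · exact div_nonneg (Nat.cast_nonneg _) (le_of_lt hs)
  · show (P.X n ω : ℝ) / P.sR n ≤ 1
    rw [div_le_one hs]
    have h := (Nat.cast_le (α := ℝ)).mpr (P.hXle n ω)
    unfold sR
    push_cast at h ⊢
    linarith

lemma sum_ind_eq_Gn (n : ℕ) (ω : Ω) :
    ∑ k ∈ Finset.range (P.m + 1),
      ((1 : ℝ) * (P.Ered n k).indicator (fun _ => (1 : ℝ)) ω
        + (1 : ℝ) * (P.Eblue n k).indicator (fun _ => (1 : ℝ)) ω)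
      = (P.Gn n).indicator (fun _ => (1 : ℝ)) ω := by
  by_cases hω : ω ∈ P.Gn n
  · rw [Set.indicator_of_mem hω]
    obtain ⟨k₀, hk₀⟩ := Set.mem_iUnion.mp hω
    obtain ⟨hk₀mem, hcase⟩ := Set.mem_iUnion.mp hk₀
    rcases hcase with hred | hblue
    · exact (P.sum_event_weights (fun _ => 1) (fun _ => 1) hk₀mem).1 hred
    · exact (P.sum_event_weights (fun _ => 1) (fun _ => 1) hk₀mem).2 hblue
  · rw [Set.indicator_of_notMem hω]
    apply Finset.sum_eq_zero
    intro k hk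
    have h1 : ω ∉ P.Ered n k := fun h =>
      hω (Set.mem_iUnion.mpr ⟨k, Set.mem_iUnion.mpr ⟨hk, Or.inl h⟩⟩)
    have h2 : ω ∉ P.Eblue n k := fun h =>
      hω (Set.mem_iUnion.mpr ⟨k, Set.mem_iUnion.mpr ⟨hk, Or.inr h⟩⟩)
    rw [Set.indicator_of_notMem h1, Set.indicator_of_notMem h2]
    ring

lemma ae_mem_Gn (n : ℕ) : ∀ᵐ ω ∂P.μ, ω ∈ P.Gn n := by
  haveI := P.isProb
  set f : ℕ → Ω → ℝ := fun k => (P.Ered n k).indicator (fun _ => (1 : ℝ))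
    + (P.Eblue n k).indicator (fun _ => (1 : ℝ)) with hfdef
  set hfun : Ω → ℝ := ∑ k ∈ Finset.range (P.m + 1), f k with hfundef
  have hint : ∀ k ∈ Finset.range (P.m + 1), Integrable (f k) P.μ := fun k _ =>
    ((integrable_const (1 : ℝ)).indicator (P.measurableSet_Ered n k)).add
      ((integrable_const (1 : ℝ)).indicator (P.measurableSet_Eblue n k))
  have hce : P.μ[hfun | P.F n] =ᵐ[P.μ] fun ω => ∑ k ∈ Finset.range (P.m + 1),
      ((P.m.choose k : ℝ) * (P.xf n ω) ^ k * (1 - P.xf n ω) ^ (P.m - k) * P.p k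
        + (P.m.choose k : ℝ) * (P.xf n ω) ^ k * (1 - P.xf n ω) ^ (P.m - k) * (1 - P.p k)) := by
    refine (condExp_finset_sum hint _).trans ?_
    refine EventuallyEq.trans (Filter.Eventually.of_forall
      (fun ω => Finset.sum_apply ω (Finset.range (P.m + 1)) _)) ?_
    apply EventuallyEq.finsetSum
    intro k hk
    have hkm : k ≤ P.m := by simpa [Nat.lt_succ_iff] using hk
    have h1 : P.μ[(P.Ered n k).indicator (fun _ => (1 : ℝ)) | P.F n] =ᵐ[P.μ]
        fun ω => (P.m.choose k : ℝ) * (P.xf n ω) ^ k * (1 - P.xf n ω) ^ (P.m - k) * P.p k :=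
      P.step_red n k hkm
    have h2 : P.μ[(P.Eblue n k).indicator (fun _ => (1 : ℝ)) | P.F n] =ᵐ[P.μ]
        fun ω => (P.m.choose k : ℝ) * (P.xf n ω) ^ k * (1 - P.xf n ω) ^ (P.m - k) * (1 - P.p k) :=
      P.step_blue n k hkm
    refine (condExp_add ((integrable_const (1 : ℝ)).indicator (P.measurableSet_Ered n k))
      ((integrable_const (1 : ℝ)).indicator (P.measurableSet_Eblue n k)) _).trans ?_
    filter_upwards [h1, h2] with ω hω1 hω2
    simp only [Pi.add_apply]
    rw [hω1, hω2]
  have h1 : ∫ ω, hfun ω ∂P.μ = 1 := by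
    rw [← integral_condExp (P.F.le n) (f := hfun)]
    rw [integral_congr_ae hce]
    have hone : ∀ ω : Ω, ∑ k ∈ Finset.range (P.m + 1),
        ((P.m.choose k : ℝ) * (P.xf n ω) ^ k * (1 - P.xf n ω) ^ (P.m - k) * P.p k
          + (P.m.choose k : ℝ) * (P.xf n ω) ^ k * (1 - P.xf n ω) ^ (P.m - k) * (1 - P.p k))
        = 1 := fun ω => alg_total P.m P.p (P.xf n ω)
    rw [integral_congr_ae (Filter.Eventually.of_forall hone)]
    simp
  have h2 : ∫ ω, hfun ω ∂P.μ = (P.μ (P.Gn n)).toReal := by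
    have heq : ∀ ω, hfun ω = (P.Gn n).indicator (fun _ => (1 : ℝ)) ω := by
      intro ω
      rw [hfundef, Finset.sum_apply, ← P.sum_ind_eq_Gn n ω]
      exact Finset.sum_congr rfl fun k _ => by simp [hfdef, Pi.add_apply]
    rw [integral_congr_ae (Filter.Eventually.of_forall heq), integral_indicator_const _
      (P.measurableSet_Gn n)]
    simp
    rfl
  have h3 : P.μ (P.Gn n) = 1 := by
    rw [h1] at h2
    have hne : P.μ (P.Gn n) ≠ ⊤ := measure_ne_top _ _
    rw [← ENNReal.ofReal_toReal hne, ← h2]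
    simp
  have h4 : P.μ (P.Gn n)ᶜ = 0 := by
    rw [measure_compl (P.measurableSet_Gn n) (measure_ne_top _ _), h3]
    simp
  exact (MeasureTheory.mem_ae_iff.mpr (by simpa using h4))

end PAProcess

end Plumbing2
section Plumbing3

variable {Ω : Type} [MeasurableSpace Ω]

lemma alg_X (m : ℕ) (p : ℕ → ℝ) (X x : ℝ) :
    ∑ k ∈ Finset.range (m + 1),
      ((X + k + m) * ((m.choose k : ℝ) * x ^ k * (1 - x) ^ (m - k) * p k)
        + (X + k) * ((m.choose k : ℝ) * x ^ k * (1 - x) ^ (m - k) * (1 - p k)))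
      = X + m * x + m * polyQ m p x := by
  have h1 := bernstein_sum_one m x
  have h2 := bernstein_sum_k m x
  have hstep : ∀ k ∈ Finset.range (m + 1),
      (X + k + m) * ((m.choose k : ℝ) * x ^ k * (1 - x) ^ (m - k) * p k)
        + (X + k) * ((m.choose k : ℝ) * x ^ k * (1 - x) ^ (m - k) * (1 - p k))
      = X * ((m.choose k : ℝ) * x ^ k * (1 - x) ^ (m - k))
        + (k : ℝ) * ((m.choose k : ℝ) * x ^ k * (1 - x) ^ (m - k))
        + m * ((m.choose k : ℝ) * x ^ k * (1 - x) ^ (m - k) * p k) := by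
    intro k _; ring
  rw [Finset.sum_congr rfl hstep, Finset.sum_add_distrib, Finset.sum_add_distrib,
    ← Finset.mul_sum, ← Finset.mul_sum, h1, h2, polyQ]
  ring

lemma polyP_continuous (m : ℕ) (p : ℕ → ℝ) : Continuous (polyP m p) := by
  unfold polyP
  exact continuous_const.mul (continuous_finset_sum _ fun k _ => by fun_prop)

namespace PAProcess

variable (P : PAProcess Ω)

lemma integrable_mul_indicator {g : Ω → ℝ} {C : ℝ} (hC : 0 ≤ C) (hg : Measurable g)
    (hb : ∀ ω, |g ω| ≤ C) {s : Set Ω} (hs : MeasurableSet s) :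
    Integrable (g * s.indicator (fun _ => (1 : ℝ))) P.μ := by
  haveI := P.isProb
  apply integrable_of_ae_bound (C := C)
    (hg.mul (measurable_const.indicator hs)).aestronglyMeasurable
  apply Filter.Eventually.of_forall
  intro ω
  by_cases hω : ω ∈ s
  · simp only [Pi.mul_apply, Set.indicator_of_mem hω, mul_one]
    exact hb ω
  · simp only [Pi.mul_apply, Set.indicator_of_notMem hω, mul_zero, abs_zero]
    exact hC

lemma g1_bound (n k : ℕ) (ω : Ω) :
    |(P.X n ω : ℝ) + k + P.m| ≤ ((P.X0 + P.Y0 + 2 * P.m * n : ℕ) : ℝ) + k + P.m := by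
  have h := (Nat.cast_le (α := ℝ)).mpr (P.hXle n ω)
  rw [abs_of_nonneg (by positivity)]
  have hk : (0:ℝ) ≤ k := Nat.cast_nonneg _
  push_cast at h ⊢
  linarith

lemma measurableFn_xf (n : ℕ) : Measurable[P.F n] (P.xf n) :=
  (measurable_from_top.comp (P.adaptedX n)).div_const _

lemma condexp_Xcast (n : ℕ) :
    P.μ[(fun ω => (P.X (n + 1) ω : ℝ)) | P.F n] =ᵐ[P.μ]
      fun ω => (P.X n ω : ℝ) + P.m * P.xf n ω + P.m * polyQ P.m P.p (P.xf n ω) := by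
  haveI := P.isProb
  set CX : ℝ := ((P.X0 + P.Y0 + 2 * P.m * n : ℕ) : ℝ) with hCX
  set g1 : ℕ → Ω → ℝ := fun k ω => (P.X n ω : ℝ) + k + P.m with hg1
  set g2 : ℕ → Ω → ℝ := fun k ω => (P.X n ω : ℝ) + k with hg2
  set f : ℕ → Ω → ℝ := fun k => g1 k * (P.Ered n k).indicator (fun _ => (1 : ℝ))
    + g2 k * (P.Eblue n k).indicator (fun _ => (1 : ℝ)) with hfdef
  have hg1m : ∀ k, Measurable (g1 k) := fun k => ((P.measurable_Xcast n).add_const _).add_const _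
  have hg2m : ∀ k, Measurable (g2 k) := fun k => (P.measurable_Xcast n).add_const _
  have hg1b : ∀ k ω, |g1 k ω| ≤ CX + k + P.m := fun k ω => P.g1_bound n k ω
  have hg2b : ∀ k ω, |g2 k ω| ≤ CX + k + P.m := by
    intro k ω
    have h := (Nat.cast_le (α := ℝ)).mpr (P.hXle n ω)
    rw [hg2]
    rw [abs_of_nonneg (by positivity)]
    have hm : (0:ℝ) ≤ P.m := Nat.cast_nonneg _
    rw [hCX]
    push_cast at h ⊢
    linarith
  have hCnn : ∀ k : ℕ, (0:ℝ) ≤ CX + k + P.m := fun k => by positivity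
  have hint1 : ∀ k, Integrable (g1 k * (P.Ered n k).indicator (fun _ => (1 : ℝ))) P.μ :=
    fun k => P.integrable_mul_indicator (hCnn k) (hg1m k) (hg1b k) (P.measurableSet_Ered n k)
  have hint2 : ∀ k, Integrable (g2 k * (P.Eblue n k).indicator (fun _ => (1 : ℝ))) P.μ :=
    fun k => P.integrable_mul_indicator (hCnn k) (hg2m k) (hg2b k) (P.measurableSet_Eblue n k)
  have hint : ∀ k ∈ Finset.range (P.m + 1), Integrable (f k) P.μ :=
    fun k _ => (hint1 k).add (hint2 k)
  have hrep : (fun ω => (P.X (n + 1) ω : ℝ)) =ᵐ[P.μ] ∑ k ∈ Finset.range (P.m + 1), f k := by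
    filter_upwards [P.ae_mem_Gn n] with ω hω
    obtain ⟨k₀, hk₀⟩ := Set.mem_iUnion.mp hω
    obtain ⟨hk₀mem, hcase⟩ := Set.mem_iUnion.mp hk₀
    rw [Finset.sum_apply]
    have hconv : ∑ k ∈ Finset.range (P.m + 1), f k ω
        = ∑ k ∈ Finset.range (P.m + 1),
          (g1 k ω * (P.Ered n k).indicator (fun _ => (1:ℝ)) ω
            + g2 k ω * (P.Eblue n k).indicator (fun _ => (1:ℝ)) ω) :=
      Finset.sum_congr rfl fun k _ => by simp [hfdef, Pi.add_apply, Pi.mul_apply]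
    rw [hconv]
    rcases hcase with hred | hblue
    · rw [(P.sum_event_weights (fun k => g1 k ω) (fun k => g2 k ω) hk₀mem).1 hred]
      obtain ⟨_, hx⟩ := hred
      rw [hx, hg1]
      push_cast
      ring
    · rw [(P.sum_event_weights (fun k => g1 k ω) (fun k => g2 k ω) hk₀mem).2 hblue]
      obtain ⟨_, hx⟩ := hblue
      rw [hx, hg2]
      push_cast
      ring
  refine (condExp_congr_ae hrep).trans ?_
  refine (condExp_finset_sum hint _).trans ?_
  refine EventuallyEq.trans (Filter.Eventually.of_forall
    (fun ω => Finset.sum_apply ω (Finset.range (P.m + 1)) _)) ?_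
  have hperk : ∀ k ∈ Finset.range (P.m + 1), P.μ[f k | P.F n] =ᵐ[P.μ]
      fun ω => (g1 k ω * ((P.m.choose k : ℝ) * (P.xf n ω) ^ k * (1 - P.xf n ω) ^ (P.m - k) * P.p k)
        + g2 k ω * ((P.m.choose k : ℝ) * (P.xf n ω) ^ k * (1 - P.xf n ω) ^ (P.m - k) * (1 - P.p k))) := by
    intro k hk
    have hkm : k ≤ P.m := by simpa [Nat.lt_succ_iff] using hk
    have hstep1 : P.μ[(P.Ered n k).indicator (fun _ => (1 : ℝ)) | P.F n] =ᵐ[P.μ]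
        fun ω => (P.m.choose k : ℝ) * (P.xf n ω) ^ k * (1 - P.xf n ω) ^ (P.m - k) * P.p k :=
      P.step_red n k hkm
    have hstep2 : P.μ[(P.Eblue n k).indicator (fun _ => (1 : ℝ)) | P.F n] =ᵐ[P.μ]
        fun ω => (P.m.choose k : ℝ) * (P.xf n ω) ^ k * (1 - P.xf n ω) ^ (P.m - k) * (1 - P.p k) :=
      P.step_blue n k hkm
    have hsm1 : StronglyMeasurable[P.F n] (g1 k) :=
      (((measurable_from_top.comp (P.adaptedX n)).add_const _).add_const _).stronglyMeasurable
    have hsm2 : StronglyMeasurable[P.F n] (g2 k) :=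
      ((measurable_from_top.comp (P.adaptedX n)).add_const _).stronglyMeasurable
    have hpull1 := condExp_mul_of_stronglyMeasurable_left (μ := P.μ) hsm1 (hint1 k)
      ((integrable_const (1 : ℝ)).indicator (P.measurableSet_Ered n k))
    have hpull2 := condExp_mul_of_stronglyMeasurable_left (μ := P.μ) hsm2 (hint2 k)
      ((integrable_const (1 : ℝ)).indicator (P.measurableSet_Eblue n k))
    refine (condExp_add (hint1 k) (hint2 k) _).trans ?_
    filter_upwards [hpull1, hpull2, hstep1, hstep2] with ω h1 h2 h3 h4
    simp only [Pi.add_apply]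
    rw [h1, h2]
    simp only [Pi.mul_apply]
    rw [h3, h4]
  refine (EventuallyEq.finsetSum _ _ _ hperk).trans ?_
  apply Filter.Eventually.of_forall
  intro ω
  simp only
  calc ∑ k ∈ Finset.range (P.m + 1),
      (g1 k ω * ((P.m.choose k : ℝ) * (P.xf n ω) ^ k * (1 - P.xf n ω) ^ (P.m - k) * P.p k)
        + g2 k ω * ((P.m.choose k : ℝ) * (P.xf n ω) ^ k * (1 - P.xf n ω) ^ (P.m - k) * (1 - P.p k)))
      = ∑ k ∈ Finset.range (P.m + 1),
        (((P.X n ω : ℝ) + k + P.m) * ((P.m.choose k : ℝ) * (P.xf n ω) ^ k * (1 - P.xf n ω) ^ (P.m - k) * P.p k)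
          + ((P.X n ω : ℝ) + k) * ((P.m.choose k : ℝ) * (P.xf n ω) ^ k * (1 - P.xf n ω) ^ (P.m - k) * (1 - P.p k))) := by
        exact Finset.sum_congr rfl fun k _ => by rw [hg1, hg2]
    _ = (P.X n ω : ℝ) + P.m * P.xf n ω + P.m * polyQ P.m P.p (P.xf n ω) :=
        alg_X P.m P.p _ _

lemma condexp_xf (hX0 : 0 < P.X0) (n : ℕ) :
    P.μ[P.xf (n + 1) | P.F n] =ᵐ[P.μ]
      fun ω => P.xf n ω + (2 * P.m / P.sR (n + 1)) * polyP P.m P.p (P.xf n ω) := by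
  haveI := P.isProb
  have heq : P.xf (n + 1) = (P.sR (n + 1))⁻¹ • (fun ω => (P.X (n + 1) ω : ℝ)) := by
    funext ω
    simp only [Pi.smul_apply, smul_eq_mul, xf]
    rw [div_eq_inv_mul]
  rw [heq]
  refine (condExp_smul _ _ _).trans ?_
  filter_upwards [P.condexp_Xcast n] with ω hω
  simp only [Pi.smul_apply, smul_eq_mul]
  rw [hω]
  have hs := P.sR_pos hX0 n
  have hs' := P.sR_pos hX0 (n + 1)
  have hsne : P.sR n ≠ 0 := ne_of_gt hs
  have hs'ne : P.sR (n + 1) ≠ 0 := ne_of_gt hs'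
  have hX : (P.X n ω : ℝ) = P.sR n * P.xf n ω := by
    rw [xf, mul_div_cancel₀ _ hsne]
  have hQ : polyQ P.m P.p (P.xf n ω) = P.xf n ω + 2 * polyP P.m P.p (P.xf n ω) := by
    have := polyP_eq_polyQ P.m P.hm P.p (P.xf n ω)
    linarith
  rw [hX, hQ, P.sR_succ n] at *
  field_simp
  ring

end PAProcess

end Plumbing3
section Plumbing4

variable {Ω : Type} [MeasurableSpace Ω]

namespace PAProcess

variable (P : PAProcess Ω)

lemma ae_A_succ (n : ℕ) : ∀ᵐ ω ∂P.μ,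
    (P.A (n + 1) ω : ℝ) = (P.A n ω : ℝ) + (P.Aup n).indicator (fun _ => (1 : ℝ)) ω := by
  filter_upwards [P.ae_mem_Gn n] with ω hω
  obtain ⟨k₀, hk₀⟩ := Set.mem_iUnion.mp hω
  obtain ⟨hk₀mem, hcase⟩ := Set.mem_iUnion.mp hk₀
  rcases hcase with hred | hblue
  · obtain ⟨ha, _⟩ := hred
    have hup : ω ∈ P.Aup n := ha
    rw [Set.indicator_of_mem hup, ha]
    push_cast
    ring
  · obtain ⟨ha, _⟩ := hblue
    have hup : ω ∉ P.Aup n := by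
      intro h
      have : P.A (n + 1) ω = P.A n ω + 1 := h
      omega
    rw [Set.indicator_of_notMem hup, ha]
    ring

lemma ae_A_le (n : ℕ) : ∀ᵐ ω ∂P.μ, P.A n ω ≤ P.A0 + n := by
  induction n with
  | zero =>
    apply Filter.Eventually.of_forall
    intro ω
    rw [P.hA0 ω]
    omega
  | succ n ih =>
    filter_upwards [ih, P.ae_mem_Gn n] with ω h1 hω
    obtain ⟨k₀, hk₀⟩ := Set.mem_iUnion.mp hω
    obtain ⟨_, hcase⟩ := Set.mem_iUnion.mp hk₀
    rcases hcase with hred | hblue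
    · obtain ⟨ha, _⟩ := hred; omega
    · obtain ⟨ha, _⟩ := hblue; omega

lemma integrable_Acast (n : ℕ) : Integrable (fun ω => (P.A n ω : ℝ)) P.μ := by
  haveI := P.isProb
  apply integrable_of_ae_bound (C := ((P.A0 + n : ℕ) : ℝ)) (P.measurable_Acast n).aestronglyMeasurable
  filter_upwards [P.ae_A_le n] with ω hω
  rw [abs_of_nonneg (Nat.cast_nonneg _)]
  exact_mod_cast hω

lemma condexp_ind_Aup (n : ℕ) :
    P.μ[(P.Aup n).indicator (fun _ => (1 : ℝ)) | P.F n] =ᵐ[P.μ]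
      fun ω => polyQ P.m P.p (P.xf n ω) := by
  haveI := P.isProb
  have hrep : (P.Aup n).indicator (fun _ => (1 : ℝ)) =ᵐ[P.μ]
      ∑ k ∈ Finset.range (P.m + 1), (P.Ered n k).indicator (fun _ => (1 : ℝ)) := by
    filter_upwards [P.ae_mem_Gn n] with ω hω
    obtain ⟨k₀, hk₀⟩ := Set.mem_iUnion.mp hω
    obtain ⟨hk₀mem, hcase⟩ := Set.mem_iUnion.mp hk₀
    rw [Finset.sum_apply]
    rcases hcase with hred | hblue
    · have hup : ω ∈ P.Aup n := hred.1
      rw [Set.indicator_of_mem hup]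
      rw [Finset.sum_eq_single_of_mem k₀ hk₀mem]
      · rw [Set.indicator_of_mem hred]
      · intro j _ hj
        exact Set.indicator_of_notMem (fun hr => hj (P.red_red hr hred)) _
    · have hup : ω ∉ P.Aup n := by
        intro h
        have h1 : P.A (n + 1) ω = P.A n ω + 1 := h
        have h2 : P.A (n + 1) ω = P.A n ω := hblue.1
        omega
      rw [Set.indicator_of_notMem hup]
      symm
      apply Finset.sum_eq_zero
      intro k _
      exact Set.indicator_of_notMem (fun hr => P.red_blue hr hblue) _
  refine (condExp_congr_ae hrep).trans ?_
  have hint : ∀ k ∈ Finset.range (P.m + 1),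
      Integrable ((P.Ered n k).indicator (fun _ => (1 : ℝ))) P.μ := fun k _ =>
    (integrable_const (1 : ℝ)).indicator (P.measurableSet_Ered n k)
  refine (condExp_finset_sum hint _).trans ?_
  refine EventuallyEq.trans (Filter.Eventually.of_forall
    (fun ω => Finset.sum_apply ω (Finset.range (P.m + 1)) _)) ?_
  have hperk : ∀ k ∈ Finset.range (P.m + 1),
      P.μ[(P.Ered n k).indicator (fun _ => (1 : ℝ)) | P.F n] =ᵐ[P.μ]
        fun ω => (P.m.choose k : ℝ) * (P.xf n ω) ^ k * (1 - P.xf n ω) ^ (P.m - k) * P.p k :=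
    fun k hk => P.step_red n k (by simpa [Nat.lt_succ_iff] using hk)
  refine (EventuallyEq.finsetSum _ _ _ hperk).trans ?_
  apply Filter.Eventually.of_forall
  intro ω
  rfl

lemma condexp_Acast (n : ℕ) :
    P.μ[(fun ω => (P.A (n + 1) ω : ℝ)) | P.F n] =ᵐ[P.μ]
      fun ω => (P.A n ω : ℝ) + polyQ P.m P.p (P.xf n ω) := by
  haveI := P.isProb
  have hrep : (fun ω => (P.A (n + 1) ω : ℝ)) =ᵐ[P.μ]
      (fun ω => (P.A n ω : ℝ)) + (P.Aup n).indicator (fun _ => (1 : ℝ)) := by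
    filter_upwards [P.ae_A_succ n] with ω hω
    simpa [Pi.add_apply] using hω
  refine (condExp_congr_ae hrep).trans ?_
  refine (condExp_add (P.integrable_Acast n)
    ((integrable_const (1 : ℝ)).indicator (P.measurableSet_Aup n)) _).trans ?_
  have h1 : P.μ[(fun ω => (P.A n ω : ℝ)) | P.F n] = fun ω => (P.A n ω : ℝ) :=
    condExp_of_stronglyMeasurable (P.F.le n)
      (Measurable.stronglyMeasurable
        (show Measurable[P.F n] fun ω => ((P.A n ω : ℕ) : ℝ) from
          measurable_from_top.comp (P.adaptedA n)))
      (P.integrable_Acast n)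
  filter_upwards [P.condexp_ind_Aup n] with ω hω2
  rw [Pi.add_apply, congrFun h1 ω, hω2]

/-- conditional expectation of the next normalized red-node count. -/
lemma condexp_a (n : ℕ) :
    P.μ[P.a (n + 2) | P.F (n + 1)] =ᵐ[P.μ]
      fun ω => P.a (n + 1) ω + (1 / ((P.A0 : ℝ) + P.B0 + (n + 2)))
        * (polyQ P.m P.p (P.xf (n + 1) ω) - P.a (n + 1) ω) := by
  haveI := P.isProb
  have heq : P.a (n + 2) = ((P.A0 : ℝ) + P.B0 + (n + 2))⁻¹ • (fun ω => (P.A (n + 2) ω : ℝ)) := by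
    funext ω
    simp only [Pi.smul_apply, smul_eq_mul, a]
    rw [div_eq_inv_mul]
    push_cast
    ring_nf
  rw [heq]
  refine (condExp_smul _ _ _).trans ?_
  filter_upwards [P.condexp_Acast (n + 1)] with ω hω
  simp only [Pi.smul_apply, smul_eq_mul]
  rw [hω]
  have hT1 : (0:ℝ) < (P.A0 : ℝ) + P.B0 + (n + 1) := by positivity
  have hT2 : (0:ℝ) < (P.A0 : ℝ) + P.B0 + (n + 2) := by positivity
  have hA : (P.A (n + 1) ω : ℝ) = ((P.A0 : ℝ) + P.B0 + (n + 1)) * P.a (n + 1) ω := by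
    rw [a]
    push_cast
    rw [mul_comm, div_mul_cancel₀]
    exact ne_of_gt (by linarith)
  rw [hA]
  have hT2ne : ((P.A0 : ℝ) + P.B0 + (n + 2)) ≠ 0 := ne_of_gt hT2
  field_simp
  ring

end PAProcess

end Plumbing4
section Plumbing5

variable {Ω : Type} [MeasurableSpace Ω]

lemma sum_inv_sq_le (n : ℕ) : ∑ i ∈ Finset.range n, (1 / ((i : ℝ) + 1)) ^ 2 ≤ 2 := by
  have key : ∀ n : ℕ, 1 ≤ n → ∑ i ∈ Finset.range n, (1 / ((i : ℝ) + 1)) ^ 2 ≤ 2 - 1 / (n : ℝ) := by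
    intro n hn
    induction n with
    | zero => omega
    | succ n ih =>
      rcases Nat.eq_or_lt_of_le hn with h | h
      · rw [← h]
        norm_num
      · have hn1 : 1 ≤ n := by omega
        rw [Finset.sum_range_succ]
        have h1 : (0:ℝ) < (n : ℝ) := by exact_mod_cast hn1
        have h2 : (0:ℝ) < (n : ℝ) + 1 := by positivity
        have h3 : (1 / ((n : ℝ) + 1)) ^ 2 ≤ 1 / (n:ℝ) - 1/((n:ℝ)+1) := by
          rw [div_sub_div _ _ (ne_of_gt h1) (ne_of_gt h2), div_pow, one_pow]
          rw [div_le_div_iff₀ (by positivity) (by positivity)]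
          nlinarith
        have hsum := ih hn1
        push_cast
        linarith
  rcases Nat.eq_zero_or_pos n with h | h
  · simp [h]
  · have := key n h
    have h1 : (0:ℝ) < (n : ℝ) := by exact_mod_cast h
    have h2 : 0 ≤ 1/(n:ℝ) := by positivity
    linarith

lemma polyP_bound (m : ℕ) (p : ℕ → ℝ) (z : ℝ) (hz : z ∈ Set.Icc (0:ℝ) 1) :
    |polyP m p z|
      ≤ (1/2) * ∑ k ∈ Finset.range (m + 1), (m.choose k : ℝ) * |p k - (k : ℝ) / m| := by
  obtain ⟨hz0, hz1⟩ := hz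
  rw [polyP, abs_mul, abs_of_nonneg (by norm_num : (0:ℝ) ≤ 1/2)]
  apply mul_le_mul_of_nonneg_left _ (by norm_num)
  refine le_trans (Finset.abs_sum_le_sum_abs _ _) ?_
  apply Finset.sum_le_sum
  intro k _
  rw [abs_mul, abs_mul, abs_mul]
  have h1 : |z ^ k| ≤ 1 := by
    rw [abs_pow, abs_of_nonneg hz0]; exact pow_le_one₀ hz0 hz1
  have h2 : |(1 - z) ^ (m - k)| ≤ 1 := by
    rw [abs_pow, abs_of_nonneg (by linarith)]; exact pow_le_one₀ (by linarith) (by linarith)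
  have h3 : (0:ℝ) ≤ (m.choose k : ℝ) := Nat.cast_nonneg _
  have h4 : (0:ℝ) ≤ |p k - (k:ℝ)/m| := abs_nonneg _
  rw [abs_of_nonneg h3]
  calc (m.choose k : ℝ) * |z ^ k| * |(1 - z) ^ (m - k)| * |p k - (k:ℝ)/m|
      ≤ (m.choose k : ℝ) * 1 * 1 * |p k - (k:ℝ)/m| := by
        gcongr <;> first | exact abs_nonneg _ | exact h1 | exact h2
    _ = (m.choose k : ℝ) * |p k - (k:ℝ)/m| := by ring

namespace PAProcess

variable (P : PAProcess Ω)

/-- The Doob martingale part of `xf`. -/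
def MM (n : ℕ) (ω : Ω) : ℝ :=
  P.xf n ω - ∑ i ∈ Finset.range n, (2 * P.m / P.sR (i + 1)) * polyP P.m P.p (P.xf i ω)

/-- bound constant for `polyP` on `[0,1]`. -/
def Kb : ℝ := (1/2) * ∑ k ∈ Finset.range (P.m + 1), (P.m.choose k : ℝ) * |P.p k - (k : ℝ) / P.m|

lemma Kb_nonneg : 0 ≤ P.Kb := by
  unfold Kb
  apply mul_nonneg (by norm_num)
  apply Finset.sum_nonneg
  intro k _
  exact mul_nonneg (Nat.cast_nonneg _) (abs_nonneg _)

lemma measurableFn_MM (n : ℕ) : Measurable[P.F n] (P.MM n) := by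
  apply Measurable.sub (P.measurableFn_xf n)
  apply Finset.measurable_sum
  intro i hi
  have hile : i ≤ n := le_of_lt (Finset.mem_range.mp hi)
  exact ((polyP_continuous P.m P.p).measurable.comp
    ((P.measurableFn_xf i).mono (P.F.mono hile) le_rfl)).const_mul _

lemma MM_abs_le (hX0 : 0 < P.X0) (n : ℕ) (ω : Ω) :
    |P.MM n ω| ≤ 1 + ∑ i ∈ Finset.range n, (2 * P.m / P.sR (i + 1)) * P.Kb := by
  have h1 : |P.xf n ω| ≤ 1 := by
    obtain ⟨ha, hb⟩ := P.xf_mem_Icc hX0 n ω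
    rw [abs_of_nonneg ha]; exact hb
  have h2 : |∑ i ∈ Finset.range n, (2 * P.m / P.sR (i + 1)) * polyP P.m P.p (P.xf i ω)|
      ≤ ∑ i ∈ Finset.range n, (2 * P.m / P.sR (i + 1)) * P.Kb := by
    refine le_trans (Finset.abs_sum_le_sum_abs _ _) ?_
    apply Finset.sum_le_sum
    intro i _
    rw [abs_mul]
    have hc : 0 ≤ 2 * (P.m:ℝ) / P.sR (i+1) :=
      div_nonneg (by positivity) (le_of_lt (P.sR_pos hX0 (i+1)))
    rw [abs_of_nonneg hc]
    exact mul_le_mul_of_nonneg_left (polyP_bound P.m P.p _ (P.xf_mem_Icc hX0 i ω)) hc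
  calc |P.MM n ω| ≤ |P.xf n ω| + |∑ i ∈ Finset.range n,
        (2 * P.m / P.sR (i + 1)) * polyP P.m P.p (P.xf i ω)| := abs_sub _ _
    _ ≤ 1 + ∑ i ∈ Finset.range n, (2 * P.m / P.sR (i + 1)) * P.Kb := add_le_add h1 h2

lemma integrable_MM (hX0 : 0 < P.X0) (n : ℕ) : Integrable (P.MM n) P.μ := by
  haveI := P.isProb
  apply integrable_of_ae_bound
    (C := 1 + ∑ i ∈ Finset.range n, (2 * P.m / P.sR (i + 1)) * P.Kb)
    ((P.measurableFn_MM n).mono (P.F.le n) le_rfl).aestronglyMeasurable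
  exact Filter.Eventually.of_forall (P.MM_abs_le hX0 n)

lemma martingale_MM (hX0 : 0 < P.X0) : Martingale P.MM P.F P.μ := by
  haveI := P.isProb
  apply martingale_nat (fun n => (P.measurableFn_MM n).stronglyMeasurable)
    (fun n => P.integrable_MM hX0 n)
  intro n
  set D : Ω → ℝ := fun ω => ∑ i ∈ Finset.range (n + 1),
    (2 * P.m / P.sR (i + 1)) * polyP P.m P.p (P.xf i ω) with hD
  have hDmeas : Measurable[P.F n] D := by
    apply Finset.measurable_sum
    intro i hi
    have hile : i ≤ n := by have := Finset.mem_range.mp hi; omega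
    exact ((polyP_continuous P.m P.p).measurable.comp
      ((P.measurableFn_xf i).mono (P.F.mono hile) le_rfl)).const_mul _
  have hDbound : ∀ ω, |D ω| ≤ ∑ i ∈ Finset.range (n + 1), (2 * P.m / P.sR (i + 1)) * P.Kb := by
    intro ω
    refine le_trans (Finset.abs_sum_le_sum_abs _ _) ?_
    apply Finset.sum_le_sum
    intro i _
    rw [abs_mul]
    have hc : 0 ≤ 2 * (P.m:ℝ) / P.sR (i+1) :=
      div_nonneg (by positivity) (le_of_lt (P.sR_pos hX0 (i+1)))
    rw [abs_of_nonneg hc]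
    exact mul_le_mul_of_nonneg_left (polyP_bound P.m P.p _ (P.xf_mem_Icc hX0 i ω)) hc
  have hDint : Integrable D P.μ :=
    integrable_of_ae_bound (hDmeas.mono (P.F.le n) le_rfl).aestronglyMeasurable
      (Filter.Eventually.of_forall (hDbound))
  have hxfint : Integrable (P.xf (n + 1)) P.μ := by
    apply integrable_of_ae_bound (C := 1)
      ((P.measurableFn_xf (n+1)).mono (P.F.le (n+1)) le_rfl).aestronglyMeasurable
    apply Filter.Eventually.of_forall
    intro ω
    obtain ⟨ha, hb⟩ := P.xf_mem_Icc hX0 (n+1) ω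
    rw [abs_of_nonneg ha]; exact hb
  have hMMeq : P.MM (n + 1) = P.xf (n + 1) - D := by
    funext ω
    simp [MM, hD, Pi.sub_apply]
  rw [hMMeq]
  refine EventuallyEq.symm ?_
  refine (condExp_sub hxfint hDint _).trans ?_
  have hDce : P.μ[D | P.F n] = D :=
    condExp_of_stronglyMeasurable (P.F.le n) hDmeas.stronglyMeasurable hDint
  filter_upwards [P.condexp_xf hX0 n] with ω hω
  rw [Pi.sub_apply, congrFun hDce ω, hω]
  simp only [MM, hD]
  rw [Finset.sum_range_succ]
  ring

lemma MM_conv (hX0 : 0 < P.X0) :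
    ∀ᵐ ω ∂P.μ, ∃ ll, Tendsto (fun n => P.MM n ω) atTop (𝓝 ll) := by
  haveI := P.isProb
  set CM : ℝ := 4 * P.m + 2 * P.m * P.Kb with hCM
  have hCMnn : 0 ≤ CM := by
    have := P.Kb_nonneg
    have : (0:ℝ) ≤ P.m := Nat.cast_nonneg _
    nlinarith [P.Kb_nonneg]
  apply martingale_ae_tendsto_of_sq_bdd P.F P.MM (P.martingale_MM hX0)
    (fun n => CM / ((n : ℝ) + 1)) 1 (CM ^2 * 2)
  · -- increments
    intro n
    filter_upwards [P.ae_mem_Gn n] with ω hω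
    obtain ⟨k₀, hk₀⟩ := Set.mem_iUnion.mp hω
    obtain ⟨hk₀mem, hcase⟩ := Set.mem_iUnion.mp hk₀
    have hk₀m : k₀ ≤ P.m := by simpa [Nat.lt_succ_iff] using hk₀mem
    -- extract increment j
    obtain ⟨j, hj, hX'⟩ : ∃ j : ℕ, j ≤ 2 * P.m ∧ P.X (n + 1) ω = P.X n ω + j := by
      rcases hcase with hred | hblue
      · exact ⟨k₀ + P.m, by omega, by rw [hred.2]; omega⟩
      · exact ⟨k₀, by omega, hblue.2⟩
    have hs := P.sR_pos hX0 n
    have hs' := P.sR_pos hX0 (n + 1)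
    have hxfe : P.xf (n + 1) ω = ((P.X n ω : ℝ) + j) / P.sR (n + 1) := by
      rw [xf, hX']
      push_cast
      ring_nf
    have hdiff : P.xf (n + 1) ω - P.xf n ω
        = (j : ℝ) / P.sR (n + 1) - P.xf n ω * (2 * P.m / P.sR (n + 1)) := by
      rw [hxfe]
      rw [show P.xf n ω = (P.X n ω : ℝ) / P.sR n from rfl]
      rw [P.sR_succ n]
      field_simp
      ring
    have hstep : |P.xf (n + 1) ω - P.xf n ω| ≤ 4 * P.m / P.sR (n + 1) := by
      rw [hdiff]
      have hj0 : (0:ℝ) ≤ (j:ℝ) := Nat.cast_nonneg _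
      have hj1 : (j : ℝ) ≤ 2 * P.m := by exact_mod_cast hj
      obtain ⟨hx0, hx1⟩ := P.xf_mem_Icc hX0 n ω
      have hc : (0:ℝ) ≤ 2 * P.m / P.sR (n+1) := div_nonneg (by positivity) (le_of_lt hs')
      have h1 : |(j : ℝ) / P.sR (n + 1)| ≤ 2 * P.m / P.sR (n + 1) := by
        rw [abs_of_nonneg (div_nonneg hj0 (le_of_lt hs'))]
        gcongr
      have h2 : |P.xf n ω * (2 * P.m / P.sR (n + 1))| ≤ 2 * P.m / P.sR (n + 1) := by
        rw [abs_mul, abs_of_nonneg hc, abs_of_nonneg hx0]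
        nlinarith
      have h4 : 4 * (P.m:ℝ) / P.sR (n+1) = 2*P.m/P.sR (n+1) + 2*P.m/P.sR (n+1) := by ring
      calc |(j : ℝ) / P.sR (n + 1) - P.xf n ω * (2 * P.m / P.sR (n + 1))|
          ≤ |(j : ℝ) / P.sR (n + 1)| + |P.xf n ω * (2 * P.m / P.sR (n + 1))| := abs_sub _ _
        _ ≤ 4 * P.m / P.sR (n + 1) := by rw [h4]; exact add_le_add h1 h2
    have hMMd : P.MM (n + 1) ω - P.MM n ω
        = (P.xf (n + 1) ω - P.xf n ω)
          - (2 * P.m / P.sR (n + 1)) * polyP P.m P.p (P.xf n ω) := by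
      simp [MM, Finset.sum_range_succ]
      ring
    have hPb : |(2 * P.m / P.sR (n + 1)) * polyP P.m P.p (P.xf n ω)|
        ≤ (2 * P.m / P.sR (n + 1)) * P.Kb := by
      rw [abs_mul]
      have hc : (0:ℝ) ≤ 2 * P.m / P.sR (n+1) := div_nonneg (by positivity) (le_of_lt hs')
      rw [abs_of_nonneg hc]
      exact mul_le_mul_of_nonneg_left (polyP_bound P.m P.p _ (P.xf_mem_Icc hX0 n ω)) hc
    have hCMs : CM / P.sR (n+1)
        = 4 * P.m / P.sR (n+1) + (2 * P.m / P.sR (n+1)) * P.Kb := by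
      rw [hCM]; ring
    calc |P.MM (n + 1) ω - P.MM n ω|
        ≤ |P.xf (n + 1) ω - P.xf n ω|
          + |(2 * P.m / P.sR (n + 1)) * polyP P.m P.p (P.xf n ω)| := by
          rw [hMMd]; exact abs_sub _ _
      _ ≤ CM / P.sR (n+1) := by rw [hCMs]; exact add_le_add hstep hPb
      _ ≤ CM / ((n : ℝ) + 1) := by
          have hge := P.sR_ge hX0 n
          gcongr
  · -- square summability
    intro n
    have hterm : ∀ i ∈ Finset.range n, (CM / ((i:ℝ)+1))^2 = CM^2 * (1/((i:ℝ)+1))^2 := by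
      intro i _; ring
    rw [Finset.sum_congr rfl hterm, ← Finset.mul_sum]
    exact mul_le_mul_of_nonneg_left (sum_inv_sq_le n) (by positivity)
  · -- initial bound
    apply Filter.Eventually.of_forall
    intro ω
    have h0 : P.MM 0 ω = P.xf 0 ω := by simp [MM]
    rw [h0]
    obtain ⟨ha, hb⟩ := P.xf_mem_Icc hX0 0 ω
    rw [abs_of_nonneg ha]; exact hb

end PAProcess

end Plumbing5
section Plumbing6

variable {Ω : Type} [MeasurableSpace Ω]

namespace PAProcess

variable (P : PAProcess Ω)

/-- shifted filtration -/
def Fs : Filtration ℕ ‹MeasurableSpace Ω› :=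
  ⟨fun n => P.F (n + 1), fun i j hij => P.F.mono (by omega), fun n => P.F.le (n + 1)⟩

@[simp] lemma Fs_apply (n : ℕ) : P.Fs n = P.F (n + 1) := rfl

/-- the Doob martingale part of `a ∘ (· + 1)`. -/
def KK (n : ℕ) (ω : Ω) : ℝ :=
  P.a (n + 1) ω - ∑ i ∈ Finset.range n,
    (1 / ((P.A0 : ℝ) + P.B0 + (i + 2))) * (polyQ P.m P.p (P.xf (i + 1) ω) - P.a (i + 1) ω)

lemma measurableFn_a (n : ℕ) : Measurable[P.F n] (P.a n) :=
  (measurable_from_top.comp (P.adaptedA n)).div_const _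

lemma ae_a_mem (n : ℕ) : ∀ᵐ ω ∂P.μ, P.a (n + 1) ω ∈ Set.Icc (0:ℝ) 1 := by
  filter_upwards [P.ae_A_le (n + 1)] with ω hω
  have hT : (0:ℝ) < (P.A0 : ℝ) + P.B0 + ((n:ℝ) + 1) := by positivity
  constructor
  · exact div_nonneg (Nat.cast_nonneg _) (by push_cast; positivity)
  · rw [a, div_le_one (by push_cast; positivity)]
    have h := (Nat.cast_le (α := ℝ)).mpr hω
    push_cast at h ⊢
    linarith

lemma measurableFn_KK (n : ℕ) : Measurable[P.F (n + 1)] (P.KK n) := by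
  apply Measurable.sub ((P.measurableFn_a (n + 1)).mono (P.F.mono (le_refl _)) le_rfl)
  apply Finset.measurable_sum
  intro i hi
  have hile : i + 1 ≤ n + 1 := by have := Finset.mem_range.mp hi; omega
  apply Measurable.const_mul
  apply Measurable.sub
  · exact (polyQ_continuous P.m P.p).measurable.comp
      ((P.measurableFn_xf (i + 1)).mono (P.F.mono hile) le_rfl)
  · exact (P.measurableFn_a (i + 1)).mono (P.F.mono hile) le_rfl

lemma KK_ae_bound (hX0 : 0 < P.X0) (n : ℕ) :
    ∀ᵐ ω ∂P.μ, |P.KK n ω| ≤ 1 + ∑ i ∈ Finset.range n,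
      (1 / ((P.A0 : ℝ) + P.B0 + (i + 2))) * 2 := by
  have hall : ∀ᵐ ω ∂P.μ, ∀ k, P.a (k + 1) ω ∈ Set.Icc (0:ℝ) 1 :=
    (MeasureTheory.ae_all_iff).mpr (fun k => P.ae_a_mem k)
  filter_upwards [hall] with ω hω
  have h1 : |P.a (n + 1) ω| ≤ 1 := by
    obtain ⟨ha, hb⟩ := hω n; rw [abs_of_nonneg ha]; exact hb
  have h2 : |∑ i ∈ Finset.range n,
      (1 / ((P.A0 : ℝ) + P.B0 + (i + 2))) * (polyQ P.m P.p (P.xf (i + 1) ω) - P.a (i + 1) ω)|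
      ≤ ∑ i ∈ Finset.range n, (1 / ((P.A0 : ℝ) + P.B0 + (i + 2))) * 2 := by
    refine le_trans (Finset.abs_sum_le_sum_abs _ _) ?_
    apply Finset.sum_le_sum
    intro i _
    rw [abs_mul]
    have hc : (0:ℝ) ≤ 1 / ((P.A0 : ℝ) + P.B0 + (i + 2)) := by positivity
    rw [abs_of_nonneg hc]
    apply mul_le_mul_of_nonneg_left _ hc
    have hQ := polyQ_mem_Icc P.m P.p P.hp _ (P.xf_mem_Icc hX0 (i+1) ω)
    obtain ⟨hQ0, hQ1⟩ := hQ
    obtain ⟨ha0, ha1⟩ := hω i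
    rw [abs_le]
    constructor <;> linarith
  calc |P.KK n ω| ≤ |P.a (n + 1) ω| + |∑ i ∈ Finset.range n,
        (1 / ((P.A0 : ℝ) + P.B0 + (i + 2))) * (polyQ P.m P.p (P.xf (i + 1) ω) - P.a (i + 1) ω)| :=
        abs_sub _ _
    _ ≤ _ := add_le_add h1 h2

lemma integrable_KK (hX0 : 0 < P.X0) (n : ℕ) : Integrable (P.KK n) P.μ := by
  haveI := P.isProb
  exact integrable_of_ae_bound
    ((P.measurableFn_KK n).mono (P.F.le (n+1)) le_rfl).aestronglyMeasurable
    (P.KK_ae_bound hX0 n)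

lemma martingale_KK (hX0 : 0 < P.X0) : Martingale P.KK P.Fs P.μ := by
  haveI := P.isProb
  apply martingale_nat (fun n => (P.measurableFn_KK n).stronglyMeasurable)
    (fun n => P.integrable_KK hX0 n)
  intro n
  set D : Ω → ℝ := fun ω => ∑ i ∈ Finset.range (n + 1),
    (1 / ((P.A0 : ℝ) + P.B0 + (i + 2))) * (polyQ P.m P.p (P.xf (i + 1) ω) - P.a (i + 1) ω)
    with hD
  have hDmeas : Measurable[P.F (n + 1)] D := by
    apply Finset.measurable_sum
    intro i hi
    have hile : i + 1 ≤ n + 1 := by have := Finset.mem_range.mp hi; omega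
    apply Measurable.const_mul
    apply Measurable.sub
    · exact (polyQ_continuous P.m P.p).measurable.comp
        ((P.measurableFn_xf (i + 1)).mono (P.F.mono hile) le_rfl)
    · exact (P.measurableFn_a (i + 1)).mono (P.F.mono hile) le_rfl
  have haint : ∀ k, Integrable (P.a (k + 1)) P.μ := by
    intro k
    apply integrable_of_ae_bound (C := 1)
      ((P.measurableFn_a (k+1)).mono (P.F.le (k+1)) le_rfl).aestronglyMeasurable
    filter_upwards [P.ae_a_mem k] with ω hω
    obtain ⟨ha, hb⟩ := hω; rw [abs_of_nonneg ha]; exact hb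
  have hDint : Integrable D P.μ := by
    apply Integrable.mono' (g := fun _ => ∑ i ∈ Finset.range (n + 1),
      (1 / ((P.A0 : ℝ) + P.B0 + (i + 2))) * 2)
    · exact integrable_const _
    · exact (hDmeas.mono (P.F.le (n+1)) le_rfl).aestronglyMeasurable
    · have hall : ∀ᵐ ω ∂P.μ, ∀ k, P.a (k + 1) ω ∈ Set.Icc (0:ℝ) 1 :=
        (MeasureTheory.ae_all_iff).mpr (fun k => P.ae_a_mem k)
      filter_upwards [hall] with ω hω
      rw [Real.norm_eq_abs]
      refine le_trans (Finset.abs_sum_le_sum_abs _ _) ?_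
      apply Finset.sum_le_sum
      intro i _
      rw [abs_mul]
      have hc : (0:ℝ) ≤ 1 / ((P.A0 : ℝ) + P.B0 + (i + 2)) := by positivity
      rw [abs_of_nonneg hc]
      apply mul_le_mul_of_nonneg_left _ hc
      obtain ⟨hQ0, hQ1⟩ := polyQ_mem_Icc P.m P.p P.hp _ (P.xf_mem_Icc hX0 (i+1) ω)
      obtain ⟨ha0, ha1⟩ := hω i
      rw [abs_le]; constructor <;> linarith
  have hKKeq : P.KK (n + 1) = P.a (n + 2) - D := by
    funext ω
    simp [KK, hD, Pi.sub_apply]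
  rw [hKKeq]
  have hsub := condExp_sub (μ := P.μ) (m := P.F (n + 1)) (haint (n + 1)) hDint
  have hDce : P.μ[D | P.F (n + 1)] = D :=
    condExp_of_stronglyMeasurable (P.F.le (n + 1)) hDmeas.stronglyMeasurable hDint
  have hgoal : P.KK n =ᵐ[P.μ] P.μ[P.a (n + 2) - D | P.F (n + 1)] := by
    refine EventuallyEq.symm (hsub.trans ?_)
    filter_upwards [P.condexp_a n] with ω hω
    rw [Pi.sub_apply, congrFun hDce ω, hω]
    simp only [KK, hD]
    rw [Finset.sum_range_succ]
    push_cast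
    ring
  exact hgoal

lemma KK_conv (hX0 : 0 < P.X0) :
    ∀ᵐ ω ∂P.μ, ∃ ll, Tendsto (fun n => P.KK n ω) atTop (𝓝 ll) := by
  haveI := P.isProb
  apply martingale_ae_tendsto_of_sq_bdd P.Fs P.KK (P.martingale_KK hX0)
    (fun n => 4 / ((n : ℝ) + 1)) 1 (4 ^ 2 * 2)
  · intro n
    have hall : ∀ᵐ ω ∂P.μ, ∀ k, P.a (k + 1) ω ∈ Set.Icc (0:ℝ) 1 :=
      (MeasureTheory.ae_all_iff).mpr (fun k => P.ae_a_mem k)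
    filter_upwards [hall, P.ae_A_succ (n + 1), P.ae_A_le (n + 1)] with ω hω hA hAle
    set T : ℝ := (P.A0 : ℝ) + P.B0 with hT
    have hT0 : (0:ℝ) ≤ T := by positivity
    have hT1 : (0:ℝ) < T + (n + 1) := by positivity
    have hT2 : (0:ℝ) < T + (n + 2) := by positivity
    -- the indicator value
    set δ : ℝ := (P.Aup (n + 1)).indicator (fun _ => (1:ℝ)) ω with hδ
    have hδ01 : 0 ≤ δ ∧ δ ≤ 1 := by
      rw [hδ]
      by_cases hm : ω ∈ P.Aup (n + 1)
      · rw [Set.indicator_of_mem hm]; norm_num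
      · rw [Set.indicator_of_notMem hm]; norm_num
    set A' : ℝ := (P.A (n + 1) ω : ℝ) with hA'
    have hA'0 : 0 ≤ A' := Nat.cast_nonneg _
    have hA'le : A' ≤ T + (n + 1) := by
      have h := (Nat.cast_le (α := ℝ)).mpr hAle
      rw [hA', hT]
      push_cast at h ⊢
      linarith
    have han1 : P.a (n + 1) ω = A' / (T + (n + 1)) := by
      rw [a, hA', hT]; push_cast; ring_nf
    have han2 : P.a (n + 2) ω = (A' + δ) / (T + (n + 2)) := by
      rw [a, hA, hA', hT, hδ]; push_cast; ring_nf
    have hastep : |P.a (n + 2) ω - P.a (n + 1) ω| ≤ 2 / (T + (n + 2)) := by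
      rw [han1, han2]
      have hrewrite : (A' + δ) / (T + (n + 2)) - A' / (T + (n + 1))
          = δ / (T + (n + 2)) - (A' / (T + (n+1))) * (1 / (T + (n + 2))) := by
        field_simp
        ring
      rw [hrewrite]
      have h1 : |δ / (T + (n + 2))| ≤ 1 / (T + (n + 2)) := by
        rw [abs_of_nonneg (div_nonneg hδ01.1 (le_of_lt hT2))]
        gcongr
        exact hδ01.2
      have h2 : |(A' / (T + (n+1))) * (1 / (T + (n + 2)))| ≤ 1 / (T + (n + 2)) := by
        rw [abs_mul, abs_of_nonneg (div_nonneg hA'0 (le_of_lt hT1)),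
          abs_of_nonneg (by positivity : (0:ℝ) ≤ 1 / (T + (n+2)))]
        have : A' / (T + (n+1)) ≤ 1 := by rw [div_le_one hT1]; exact hA'le
        nlinarith [div_nonneg hA'0 (le_of_lt hT1), (by positivity : (0:ℝ) < 1 / (T + (n+2)))]
      have h3 : (2:ℝ) / (T + (n + 2)) = 1 / (T + (n + 2)) + 1 / (T + (n + 2)) := by ring
      calc |δ / (T + (n + 2)) - (A' / (T + (n+1))) * (1 / (T + (n + 2)))|
          ≤ |δ / (T + (n + 2))| + |(A' / (T + (n+1))) * (1 / (T + (n + 2)))| := abs_sub _ _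
        _ ≤ 2 / (T + (n + 2)) := by rw [h3]; exact add_le_add h1 h2
    have hKKd : P.KK (n + 1) ω - P.KK n ω
        = (P.a (n + 2) ω - P.a (n + 1) ω)
          - (1 / (T + (n + 2))) * (polyQ P.m P.p (P.xf (n + 1) ω) - P.a (n + 1) ω) := by
      simp only [KK, hT]
      rw [Finset.sum_range_succ]
      push_cast
      ring
    obtain ⟨hQ0, hQ1⟩ := polyQ_mem_Icc P.m P.p P.hp _ (P.xf_mem_Icc hX0 (n+1) ω)
    obtain ⟨ha0, ha1⟩ := hω n
    have hdrift : |(1 / (T + (n + 2))) * (polyQ P.m P.p (P.xf (n + 1) ω) - P.a (n + 1) ω)|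
        ≤ (1 / (T + (n + 2))) * 2 := by
      rw [abs_mul, abs_of_nonneg (by positivity : (0:ℝ) ≤ 1 / (T + (n+2)))]
      apply mul_le_mul_of_nonneg_left _ (by positivity)
      rw [abs_le]; constructor <;> linarith
    have hfinal : (2:ℝ) / (T + (n + 2)) + (1 / (T + (n + 2))) * 2 = 4 / (T + (n+2)) := by
      ring
    have hTn : ((n:ℝ) + 1) ≤ T + (n + 2) := by linarith
    calc |P.KK (n + 1) ω - P.KK n ω|
        ≤ |P.a (n + 2) ω - P.a (n + 1) ω|
          + |(1 / (T + (n + 2))) * (polyQ P.m P.p (P.xf (n + 1) ω) - P.a (n + 1) ω)| := by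
          rw [hKKd]; exact abs_sub _ _
      _ ≤ 4 / (T + (n + 2)) := by rw [← hfinal]; exact add_le_add hastep hdrift
      _ ≤ 4 / ((n : ℝ) + 1) := by gcongr
  · intro n
    have hterm : ∀ i ∈ Finset.range n, (4 / ((i:ℝ)+1))^2 = 4^2 * (1/((i:ℝ)+1))^2 := by
      intro i _; ring
    rw [Finset.sum_congr rfl hterm, ← Finset.mul_sum]
    exact mul_le_mul_of_nonneg_left (sum_inv_sq_le n) (by positivity)
  · filter_upwards [P.ae_a_mem 0] with ω hω
    have h0 : P.KK 0 ω = P.a 1 ω := by simp [KK]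
    rw [h0]
    obtain ⟨ha, hb⟩ := hω
    rw [abs_of_nonneg ha]; exact hb

end PAProcess

end Plumbing6
section FinalAssembly

variable {Ω : Type} [MeasurableSpace Ω]

namespace PAProcess

variable (P : PAProcess Ω)

lemma xf_step_bound (hX0 : 0 < P.X0) (n : ℕ) (ω : Ω) (hω : ω ∈ P.Gn n) :
    |P.xf (n + 1) ω - P.xf n ω| ≤ 4 * P.m / P.sR (n + 1) := by
  obtain ⟨k₀, hk₀⟩ := Set.mem_iUnion.mp hω
  obtain ⟨hk₀mem, hcase⟩ := Set.mem_iUnion.mp hk₀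
  have hk₀m : k₀ ≤ P.m := by simpa [Nat.lt_succ_iff] using hk₀mem
  obtain ⟨j, hj, hX'⟩ : ∃ j : ℕ, j ≤ 2 * P.m ∧ P.X (n + 1) ω = P.X n ω + j := by
    rcases hcase with hred | hblue
    · exact ⟨k₀ + P.m, by omega, by rw [hred.2]; omega⟩
    · exact ⟨k₀, by omega, hblue.2⟩
  have hs := P.sR_pos hX0 n
  have hs' := P.sR_pos hX0 (n + 1)
  have hxfe : P.xf (n + 1) ω = ((P.X n ω : ℝ) + j) / P.sR (n + 1) := by
    rw [xf, hX']
    push_cast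
    ring_nf
  have hdiff : P.xf (n + 1) ω - P.xf n ω
      = (j : ℝ) / P.sR (n + 1) - P.xf n ω * (2 * P.m / P.sR (n + 1)) := by
    rw [hxfe]
    rw [show P.xf n ω = (P.X n ω : ℝ) / P.sR n from rfl]
    rw [P.sR_succ n]
    field_simp
    ring
  rw [hdiff]
  have hj0 : (0:ℝ) ≤ (j:ℝ) := Nat.cast_nonneg _
  have hj1 : (j : ℝ) ≤ 2 * P.m := by exact_mod_cast hj
  obtain ⟨hx0, hx1⟩ := P.xf_mem_Icc hX0 n ω
  have hc : (0:ℝ) ≤ 2 * P.m / P.sR (n+1) := div_nonneg (by positivity) (le_of_lt hs')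
  have h1 : |(j : ℝ) / P.sR (n + 1)| ≤ 2 * P.m / P.sR (n + 1) := by
    rw [abs_of_nonneg (div_nonneg hj0 (le_of_lt hs'))]
    gcongr
  have h2 : |P.xf n ω * (2 * P.m / P.sR (n + 1))| ≤ 2 * P.m / P.sR (n + 1) := by
    rw [abs_mul, abs_of_nonneg hc, abs_of_nonneg hx0]
    nlinarith
  have h4 : 4 * (P.m:ℝ) / P.sR (n+1) = 2*P.m/P.sR (n+1) + 2*P.m/P.sR (n+1) := by ring
  calc |(j : ℝ) / P.sR (n + 1) - P.xf n ω * (2 * P.m / P.sR (n + 1))|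
      ≤ |(j : ℝ) / P.sR (n + 1)| + |P.xf n ω * (2 * P.m / P.sR (n + 1))| := abs_sub _ _
    _ ≤ 4 * P.m / P.sR (n + 1) := by rw [h4]; exact add_le_add h1 h2

end PAProcess

lemma tendsto_const_div_succ (C : ℝ) :
    Tendsto (fun n : ℕ => C / ((n : ℝ) + 1)) atTop (𝓝 0) := by
  have h := tendsto_one_div_add_atTop_nhds_zero_nat (𝕜 := ℝ)
  have := h.const_mul C
  simpa [div_eq_mul_inv] using this

end FinalAssembly


end AuxiliaryLemmas

open Topology in
/-- **Coexistence.** In a nonlinear model with `X_0, Y_0 > 0`, if `p_0 > 0` and `p_m < 1`,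
then `P(0) = p_0/2 > 0` and `P(1) = (p_m − 1)/2 < 0`, so every point of `Z_P` lies in the
open interval `(0,1)`; consequently `a_n` converges almost surely to a limit lying in
`(0,1)`, i.e. the two types coexist in the limit. -/
theorem nonlinear_model_coexistence
    {Ω : Type} [MeasurableSpace Ω] (P : PAProcess Ω)
    (hnonlin : ∃ k ≤ P.m, P.p k ≠ (k : ℝ) / P.m)
    (hX0 : 0 < P.X0) (hY0 : 0 < P.Y0)
    (hp0 : 0 < P.p 0) (hpm : P.p P.m < 1) :
    P.poly 0 = P.p 0 / 2 ∧ 0 < P.poly 0 ∧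
    P.poly 1 = (P.p P.m - 1) / 2 ∧ P.poly 1 < 0 ∧
    P.Zp ⊆ Set.Ioo (0 : ℝ) 1 ∧
    ∃ L : Ω → ℝ,
      (∀ᵐ ω ∂P.μ, Tendsto (fun n => P.a n ω) atTop (nhds (L ω))) ∧
      (∀ᵐ ω ∂P.μ, L ω ∈ Set.Ioo (0 : ℝ) 1) := by
  classical
  haveI := P.isProb
  have hm0 : (0:ℝ) < (P.m : ℝ) := by exact_mod_cast P.hm
  have hP0 : P.poly 0 = P.p 0 / 2 := polyP_zero P.m P.hm P.p
  have hP0pos : 0 < P.poly 0 := by rw [hP0]; linarith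
  have hP1 : P.poly 1 = (P.p P.m - 1) / 2 := polyP_one P.m P.hm P.p
  have hP1neg : P.poly 1 < 0 := by rw [hP1]; linarith
  have hZp : P.Zp ⊆ Set.Ioo (0 : ℝ) 1 := by
    rintro z hz
    obtain ⟨hzIcc, hzP⟩ := hz
    obtain ⟨hz0, hz1⟩ := hzIcc
    constructor
    · rcases eq_or_lt_of_le hz0 with h | h
      · exfalso
        rw [← h] at hzP
        have hzero : P.poly 0 = 0 := hzP
        linarith
      · exact h
    · rcases eq_or_lt_of_le hz1 with h | h
      · exfalso
        rw [h] at hzP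
        have hone : P.poly 1 = 0 := hzP
        linarith
      · exact h
  have hfin : {z : ℝ | polyP P.m P.p z = 0}.Finite := by
    apply polyP_zeroset_finite P.m P.p
    have : polyP P.m P.p 0 = P.poly 0 := rfl
    rw [this, hP0]
    positivity
  have hGall : ∀ᵐ ω ∂P.μ, ∀ n, ω ∈ P.Gn n :=
    (MeasureTheory.ae_all_iff).mpr P.ae_mem_Gn
  -- main a.e. claim
  have hkey : ∀ᵐ ω ∂P.μ, ∃ z ∈ Set.Ioo (0:ℝ) 1,
      Tendsto (fun n => P.a n ω) atTop (𝓝 z) := by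
    filter_upwards [hGall, P.MM_conv hX0, P.KK_conv hX0] with ω hG hM hK
    obtain ⟨lM, hlM⟩ := hM
    set c : ℕ → ℝ := fun i => 2 * P.m / P.sR (i + 1) with hc
    have hcpos : ∀ i, 0 < c i := fun i => div_pos (by positivity) (P.sR_pos hX0 (i+1))
    have hS' : (0:ℝ) < (P.X0:ℝ) + P.Y0 + 2 * P.m := by
      have h1 : (0:ℝ) ≤ (P.X0:ℝ) := Nat.cast_nonneg _
      have h2 : (0:ℝ) ≤ (P.Y0:ℝ) := Nat.cast_nonneg _
      linarith
    have hcdiv : Tendsto (fun n => ∑ i ∈ Finset.range n, c i) atTop atTop := by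
      set C : ℝ := 2 * P.m / ((P.X0:ℝ) + P.Y0 + 2 * P.m) with hC
      have hCpos : 0 < C := div_pos (by positivity) hS'
      have hbound : ∀ i : ℕ, C * (1/((i:ℝ)+1)) ≤ c i := by
        intro i
        rw [hC, hc]
        rw [div_mul_div_comm, mul_one]
        have h1 : P.sR (i+1) ≤ ((P.X0:ℝ)+P.Y0+2*P.m) * ((i:ℝ)+1) := by
          unfold PAProcess.sR
          push_cast
          have h2 : (0:ℝ) ≤ (P.X0:ℝ) := Nat.cast_nonneg _
          have h3 : (0:ℝ) ≤ (P.Y0:ℝ) := Nat.cast_nonneg _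
          have h4 : (0:ℝ) ≤ (i:ℝ) := Nat.cast_nonneg _
          nlinarith
        rw [div_le_div_iff₀ (by positivity) (P.sR_pos hX0 (i+1))]
        nlinarith [P.sR_pos hX0 (i+1)]
      apply tendsto_atTop_mono (fun n => Finset.sum_le_sum (fun i _ => hbound i))
      have hrw : (fun n => ∑ i ∈ Finset.range n, C * (1/((i:ℝ)+1)))
          = fun n => C * ∑ i ∈ Finset.range n, (1/((i:ℝ)+1)) := by
        funext n; rw [Finset.mul_sum]
      rw [hrw]
      exact Tendsto.const_mul_atTop hCpos Real.tendsto_sum_range_one_div_nat_succ_atTop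
    have hxstep : Tendsto (fun n => P.xf (n+1) ω - P.xf n ω) atTop (𝓝 0) := by
      refine squeeze_zero_norm (fun n => ?_) (tendsto_const_div_succ (4 * P.m))
      rw [Real.norm_eq_abs]
      refine le_trans (P.xf_step_bound hX0 n ω (hG n)) ?_
      have hge := P.sR_ge hX0 n
      rw [div_le_div_iff₀ (P.sR_pos hX0 (n+1)) (by positivity)]
      nlinarith
    have hrec : ∀ n, P.xf (n+1) ω = P.xf n ω + (P.MM (n+1) ω - P.MM n ω)
        + c n * polyP P.m P.p (P.xf n ω) := by
      intro n
      simp only [PAProcess.MM, hc]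
      rw [Finset.sum_range_succ]
      ring
    obtain ⟨z, hfz, hPz, hzIcc⟩ := det1 (polyP P.m P.p) (polyP_continuous P.m P.p) hfin
      (fun n => P.xf n ω) (fun n => P.MM n ω) c hcpos hcdiv
      (fun n => P.xf_mem_Icc hX0 n ω) hrec hxstep ⟨lM, hlM⟩
    have hzIoo : z ∈ Set.Ioo (0:ℝ) 1 := hZp ⟨hzIcc, hPz⟩
    -- second stage
    obtain ⟨lK, hlK⟩ := hK
    have hQz : polyQ P.m P.p z = z := by
      have h := polyP_eq_polyQ P.m P.hm P.p z
      rw [hPz] at h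
      linarith
    set c' : ℕ → ℝ := fun i => 1 / ((P.A0:ℝ) + P.B0 + ((i:ℝ)+2)) with hc'
    have hT0 : (0:ℝ) ≤ (P.A0:ℝ) + P.B0 := by positivity
    have hc'pos : ∀ i, 0 < c' i := fun i => by rw [hc']; positivity
    have hc'le1 : ∀ i, c' i ≤ 1 := by
      intro i
      rw [hc']
      rw [div_le_one (by positivity)]
      have : (0:ℝ) ≤ (i:ℝ) := Nat.cast_nonneg _
      linarith
    have hc'div : Tendsto (fun n => ∑ i ∈ Finset.range n, c' i) atTop atTop := by
      set C : ℝ := 1 / ((P.A0:ℝ) + P.B0 + 2) with hC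
      have hCpos : 0 < C := by rw [hC]; positivity
      have hbound : ∀ i : ℕ, C * (1/((i:ℝ)+1)) ≤ c' i := by
        intro i
        rw [hC, hc']
        rw [div_mul_div_comm, mul_one]
        have hi : (0:ℝ) ≤ (i:ℝ) := Nat.cast_nonneg _
        have h1 : (P.A0:ℝ) + P.B0 + ((i:ℝ)+2) ≤ ((P.A0:ℝ)+P.B0+2) * ((i:ℝ)+1) := by
          nlinarith
        rw [div_le_div_iff₀ (by positivity) (by positivity)]
        nlinarith
      apply tendsto_atTop_mono (fun n => Finset.sum_le_sum (fun i _ => hbound i))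
      have hrw : (fun n => ∑ i ∈ Finset.range n, C * (1/((i:ℝ)+1)))
          = fun n => C * ∑ i ∈ Finset.range n, (1/((i:ℝ)+1)) := by
        funext n; rw [Finset.mul_sum]
      rw [hrw]
      exact Tendsto.const_mul_atTop hCpos Real.tendsto_sum_range_one_div_nat_succ_atTop
    have hqz : Tendsto (fun n => polyQ P.m P.p (P.xf (n+1) ω)) atTop (𝓝 z) := by
      have h1 : Tendsto (fun n => P.xf (n+1) ω) atTop (𝓝 z) :=
        hfz.comp (tendsto_add_atTop_nat 1)
      have h2 := ((polyQ_continuous P.m P.p).tendsto z).comp h1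
      rw [hQz] at h2
      exact h2
    have hrec2 : ∀ n, P.a (n+1+1) ω = P.a (n+1) ω + (P.KK (n+1) ω - P.KK n ω)
        + c' n * (polyQ P.m P.p (P.xf (n+1) ω) - P.a (n+1) ω) := by
      intro n
      simp only [PAProcess.KK, hc']
      rw [Finset.sum_range_succ]
      push_cast
      ring
    have h2 : Tendsto (fun n => P.a (n+1) ω) atTop (𝓝 z) :=
      det2 c' (fun n => polyQ P.m P.p (P.xf (n+1) ω)) (fun n => P.KK n ω)
        (fun n => P.a (n+1) ω) z lK hc'pos hc'le1 hc'div hqz hlK hrec2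
    exact ⟨z, hzIoo, (tendsto_add_atTop_iff_nat 1).mp h2⟩
  refine ⟨hP0, hP0pos, hP1, hP1neg, hZp, ?_⟩
  set L : Ω → ℝ := fun ω =>
    if h : ∃ zz, Tendsto (fun n => P.a n ω) atTop (𝓝 zz) then h.choose else 0 with hL
  refine ⟨L, ?_, ?_⟩
  · filter_upwards [hkey] with ω hω
    obtain ⟨z, _, hz⟩ := hω
    have hex : ∃ zz, Tendsto (fun n => P.a n ω) atTop (𝓝 zz) := ⟨z, hz⟩
    have : L ω = hex.choose := by rw [hL]; simp only; rw [dif_pos hex]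
    rw [this]
    exact hex.choose_spec
  · filter_upwards [hkey] with ω hω
    obtain ⟨z, hzIoo, hz⟩ := hω
    have hex : ∃ zz, Tendsto (fun n => P.a n ω) atTop (𝓝 zz) := ⟨z, hz⟩
    have h1 : L ω = hex.choose := by rw [hL]; simp only; rw [dif_pos hex]
    have h2 : L ω = z := by
      rw [h1]
      exact tendsto_nhds_unique hex.choose_spec hz
    rwa [h2]
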